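/- arXiv:1807.07503 — 3 statements merged into one kernel-verified Lean document; each statement's English description precedes it below -/
import Mathlib

section
/- (Gap projection identity used in the proof of Theorem 3.2(1b).) Let f be a Markov interval map, x ∈ E_f, and i ∈ {1,…,n} with â_{i,ι(x)} = 1. Then P_i − Σ_{j : a_{ij} = 1} S_{ij} S_{ij}* = T_i P_{e(x)} T_i*, which equals the rank-one orthogonal projection onto ℂ δ_z where z = (f|_{I_i})^{-1}(e(x)); in particular this gap projection is nonzero, and moreover Σ_{j : a_{ij} = 1} S_{ij} S_{ij}* ≠ 0. -/
open scoped Classical ENNReal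

noncomputable section

/-- Partition and branch data for a Markov interval map with `n` Markov
subintervals.  `cm j` is the point `c_j⁻` and `cp j` is `c_j⁺` (with
`cm 0 = cp 0 = c₀` and `cm n = cp n = c_n`).  `f` is the globally defined map,
`F j` is the branch of `f` on the `j`-th Markov interval (indexed by
`j = 0, …, n-1`, corresponding to the interval `I_{j+1}` of the paper) and
`F' j` is the derivative of that branch. -/
structure MarkovSystem (n : ℕ) where
  cm : ℕ → ℝ
  cp : ℕ → ℝ
  f : ℝ → ℝ
  F : ℕ → ℝ → ℝ
  F' : ℕ → ℝ → ℝ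
  two_le : 2 ≤ n
  cm_zero : cm 0 = cp 0
  cm_n : cm n = cp n
  cm_le_cp : ∀ j ≤ n, cm j ≤ cp j
  cp_lt_cm : ∀ j < n, cp j < cm (j + 1)

namespace MarkovSystem

variable {n : ℕ} (M : MarkovSystem n)

/-- The Markov interval `I_{j+1} = [c_j⁺, c_{j+1}⁻]` (for `j < n`). -/
def Ipart (j : ℕ) : Set ℝ := Set.Icc (M.cp j) (M.cm (j + 1))

/-- The escape interval `E_j = (c_j⁻, c_j⁺)` (for `1 ≤ j ≤ n-1`). -/
def Epart (j : ℕ) : Set ℝ := Set.Ioo (M.cm j) (M.cp j)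

/-- The ambient interval `I = [c₀, c_n]`. -/
def itv : Set ℝ := Set.Icc (M.cm 0) (M.cm n)

/-- The domain of `f`, namely `⋃_{j=1}^n I_j`. -/
def dom : Set ℝ := ⋃ j ∈ Finset.range n, M.Ipart j

/-- The set `Γ` of partition boundary points. -/
def Gamma : Set ℝ := {y | ∃ j ≤ n, y = M.cm j ∨ y = M.cp j}

/-- `q`-fold image of a set under `f`, applying `f` only where it is defined. -/
def iterImage : ℕ → Set ℝ → Set ℝ
  | 0, S => S
  | q + 1, S => M.f '' (iterImage q S ∩ M.dom)

/-- `f^k(x)` is defined, i.e. all earlier iterates lie in the domain. -/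
def definedUpTo (k : ℕ) (x : ℝ) : Prop := ∀ l < k, M.f^[l] x ∈ M.dom

/-- The orbit equivalence relation `R_f`. -/
def Rrel (x y : ℝ) : Prop :=
  ∃ p q : ℕ, M.definedUpTo p x ∧ M.definedUpTo q y ∧ M.f^[p] x = M.f^[q] y

/-- The generalized orbit `R_f(x)` of a point `x ∈ I`. -/
def Rclass (x : ℝ) : Set ℝ := {y | y ∈ M.itv ∧ M.Rrel x y}

/-- The maximal invariant set `Ω_f`. -/
def Omega : Set ℝ := {x | x ∈ M.itv ∧ ∀ k, M.f^[k] x ∈ M.dom}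

/-- The escape set `E_f = I \ Ω_f`. -/
def Esc : Set ℝ := M.itv \ M.Omega

/-- The regular set `Λ_f = Ω_f \ R_f(Γ)`. -/
def Lambda : Set ℝ := {x | x ∈ M.Omega ∧ ∀ γ ∈ M.Gamma, ¬ M.Rrel x γ}

/-- The escape time of a point of the escape set. -/
def tau (x : ℝ) : ℕ := sInf {k | M.f^[k] x ∉ M.dom}

/-- The final escape point `e(x) = f^{τ(x)}(x)`. -/
def e (x : ℝ) : ℝ := M.f^[M.tau x] x

/-- The transition-matrix condition `a_{ij} = 1`, i.e. `f(int I_i) ⊇ int I_j`. -/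
def trans (i j : ℕ) : Prop := interior (M.Ipart j) ⊆ M.F i '' interior (M.Ipart i)

/-- The escape-transition condition `â_{ik} = 1`, i.e. `int I_i ∩ f⁻¹(E_k) ≠ ∅`. -/
def ahat (i k : ℕ) : Prop := (interior (M.Ipart i) ∩ M.F i ⁻¹' M.Epart k).Nonempty

end MarkovSystem

/-- The defining properties (P1)-(P4) of a Markov interval map, together with the
compatibility of the global map `f` with the branches `F j`:  `f` agrees with `F j`
on `I_j` except possibly at a boundary point shared with an adjacent interval,
where `f` is given by one of the two adjacent branches. -/
structure IsMarkov {n : ℕ} (M : MarkovSystem n) : Prop where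
  compat₁ : ∀ j < n, ∀ x ∈ M.Ipart j, (∀ k < n, k ≠ j → x ∉ M.Ipart k) → M.f x = M.F j x
  compat₂ : ∀ x ∈ M.dom, ∃ j, j < n ∧ x ∈ M.Ipart j ∧ M.f x = M.F j x
  maps_into : ∀ j < n, M.F j '' M.Ipart j ⊆ M.itv
  onto : M.itv ⊆ ⋃ j ∈ Finset.range n, M.F j '' M.Ipart j
  markov : ∀ i < n, ∃ S T : Set ℕ, S ⊆ {j | j < n} ∧ T ⊆ {j | 1 ≤ j ∧ j < n} ∧
    M.F i '' M.Ipart i = (⋃ j ∈ S, M.Ipart j) ∪ (⋃ j ∈ T, M.Epart j)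
  deriv : ∀ i < n, ∀ x ∈ M.Ipart i, HasDerivWithinAt (M.F i) (M.F' i x) (M.Ipart i) x
  derivCont : ∀ i < n, ContinuousOn (M.F' i) (M.Ipart i)
  mono : ∀ i < n, StrictMonoOn (M.F i) (M.Ipart i) ∨ StrictAntiOn (M.F i) (M.Ipart i)
  expansive : ∃ b > 1, ∀ i < n, ∀ x ∈ M.Ipart i, b < |M.F' i x|
  aperiodic : ∀ i < n, ∃ q, M.dom ⊆ M.iterImage q (M.Ipart i)

namespace MarkovSystem

variable {n : ℕ} (M : MarkovSystem n)

/-- The Hilbert space `H_x = ℓ²(R_f(x))`. -/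
abbrev Hsp (x : ℝ) : Type _ := lp (fun _ : M.Rclass x => ℂ) 2

/-- The canonical orthonormal basis vector `δ_z` of `H_x`, for `z ∈ R_f(x)`. -/
def dvec {x : ℝ} (z : M.Rclass x) : M.Hsp x := lp.single 2 z 1

/-- `T` is the bounded operator `T_i` on `H_x`, determined on the basis by
`T_i δ_y = δ_{(f|_{I_i})⁻¹(y)}` if `y ∈ f(I_i)` and `T_i δ_y = 0` otherwise. -/
def IsBranchOp (x : ℝ) (i : ℕ) (T : M.Hsp x →L[ℂ] M.Hsp x) : Prop :=
  (∀ z w : M.Rclass x, (w : ℝ) ∈ M.Ipart i → M.F i w = (z : ℝ) →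
      T (M.dvec z) = M.dvec w) ∧
  (∀ z : M.Rclass x, (z : ℝ) ∉ M.F i '' M.Ipart i → T (M.dvec z) = 0)

/-- `Pe` is the rank-one orthogonal projection onto `ℂ δ_{e(x)}`. -/
def IsEscProj (x : ℝ) (Pe : M.Hsp x →L[ℂ] M.Hsp x) : Prop :=
  ∀ z : M.Rclass x, Pe (M.dvec z) = if (z : ℝ) = M.e x then M.dvec z else 0

end MarkovSystem
section Aux

open Set

namespace MarkovSystem

variable {n : ℕ} (M : MarkovSystem n)

lemma cp_lt_cm' : ∀ {a b : ℕ}, a < b → b ≤ n → M.cp a < M.cm b := by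
  intro a b hab hb
  induction b with
  | zero => omega
  | succ b ih =>
    rcases Nat.lt_succ_iff_lt_or_eq.mp hab with h | h
    · exact lt_of_lt_of_le (ih h (by omega))
        (le_trans (M.cm_le_cp b (by omega)) (M.cp_lt_cm b (by omega)).le)
    · subst h; exact M.cp_lt_cm a (by omega)

lemma cm_le_cm' {a b : ℕ} (hab : a ≤ b) (hb : b ≤ n) : M.cm a ≤ M.cm b := by
  rcases eq_or_lt_of_le hab with rfl | h
  · exact le_refl _
  · exact le_trans (M.cm_le_cp a (by omega)) (M.cp_lt_cm' h hb).le

lemma cp_le_cp' {a b : ℕ} (hab : a ≤ b) (hb : b ≤ n) : M.cp a ≤ M.cp b := by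
  rcases eq_or_lt_of_le hab with rfl | h
  · exact le_refl _
  · exact le_trans (M.cp_lt_cm' h hb).le (M.cm_le_cp b hb)

lemma cm_le_cp'' {a b : ℕ} (hab : a ≤ b) (hb : b ≤ n) : M.cm a ≤ M.cp b :=
  le_trans (M.cm_le_cm' hab hb) (M.cm_le_cp b hb)

lemma Ipart_subset_itv {j : ℕ} (hj : j < n) : M.Ipart j ⊆ M.itv := by
  intro y hy
  exact ⟨le_trans (M.cm_le_cp'' (Nat.zero_le j) hj.le) hy.1,
    le_trans hy.2 (M.cm_le_cm' hj (le_refl n))⟩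

lemma Ipart_subset_dom {j : ℕ} (hj : j < n) : M.Ipart j ⊆ M.dom := by
  intro y hy
  exact Set.mem_biUnion (Finset.mem_range.mpr hj) hy

lemma dom_subset_itv : M.dom ⊆ M.itv := by
  intro y hy
  rcases Set.mem_iUnion₂.mp hy with ⟨j, hj, hyj⟩
  exact M.Ipart_subset_itv (Finset.mem_range.mp hj) hyj

lemma mem_dom_iff {y : ℝ} : y ∈ M.dom ↔ ∃ j < n, y ∈ M.Ipart j := by
  constructor
  · intro hy
    rcases Set.mem_iUnion₂.mp hy with ⟨j, hj, hyj⟩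
    exact ⟨j, Finset.mem_range.mp hj, hyj⟩
  · rintro ⟨j, hj, hyj⟩
    exact M.Ipart_subset_dom hj hyj

lemma cm_mem_Gamma {j : ℕ} (hj : j ≤ n) : M.cm j ∈ M.Gamma := ⟨j, hj, Or.inl rfl⟩

lemma cp_mem_Gamma {j : ℕ} (hj : j ≤ n) : M.cp j ∈ M.Gamma := ⟨j, hj, Or.inr rfl⟩

lemma cp_mem_Ipart {j : ℕ} (hj : j < n) : M.cp j ∈ M.Ipart j :=
  ⟨le_refl _, (M.cp_lt_cm j hj).le⟩

lemma cm_mem_Ipart {j : ℕ} (hj : j < n) : M.cm (j+1) ∈ M.Ipart j :=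
  ⟨(M.cp_lt_cm j hj).le, le_refl _⟩

lemma Gamma_subset_dom : M.Gamma ⊆ M.dom := by
  have h2 : 2 ≤ n := M.two_le
  rintro y ⟨j, hj, hy | hy⟩ <;> subst hy
  · rcases Nat.eq_zero_or_pos j with rfl | hjpos
    · rw [M.cm_zero]
      exact M.Ipart_subset_dom (by omega) (M.cp_mem_Ipart (by omega))
    · have hj1 : j - 1 + 1 = j := by omega
      refine M.Ipart_subset_dom (show j - 1 < n by omega) ?_
      rw [show M.cm j = M.cm (j - 1 + 1) by rw [hj1]]
      exact M.cm_mem_Ipart (by omega)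
  · rcases Nat.lt_or_ge j n with hjn | hjn
    · exact M.Ipart_subset_dom hjn (M.cp_mem_Ipart hjn)
    · have hjn' : j = n := by omega
      rw [hjn', ← M.cm_n, show M.cm n = M.cm (n - 1 + 1) by congr 1; omega]
      exact M.Ipart_subset_dom (show n - 1 < n by omega) (M.cm_mem_Ipart (by omega))

lemma mem_Gamma_of_mem_two_Iparts {j k : ℕ} (hj : j < n) (hk : k < n) (hjk : j ≠ k)
    {y : ℝ} (h1 : y ∈ M.Ipart j) (h2 : y ∈ M.Ipart k) : y ∈ M.Gamma := by
  rcases Nat.lt_or_ge j k with h | h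
  · have : y = M.cm (j+1) := le_antisymm h1.2
      (le_trans (M.cm_le_cp'' (by omega) hk.le) h2.1)
    rw [this]; exact M.cm_mem_Gamma (by omega)
  · have hkj : k < j := by omega
    have : y = M.cp j := le_antisymm
      (le_trans h2.2 (M.cm_le_cp'' (by omega) hj.le)) h1.1
    rw [this]; exact M.cp_mem_Gamma (by omega)

lemma gamma_endpoint {k : ℕ} (hk : k < n) {y : ℝ} (hg : y ∈ M.Gamma)
    (hy : y ∈ M.Ipart k) : y = M.cp k ∨ y = M.cm (k+1) := by
  obtain ⟨j, hj, hcm | hcp⟩ := hg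
  · subst hcm
    rcases Nat.lt_or_ge j (k+1) with h | h
    · exact Or.inl (le_antisymm (M.cm_le_cp'' (by omega) hk.le) hy.1)
    · exact Or.inr (le_antisymm hy.2 (M.cm_le_cm' h hj))
  · subst hcp
    rcases Nat.lt_or_ge j (k+1) with h | h
    · exact Or.inl (le_antisymm (M.cp_le_cp' (by omega) hk.le) hy.1)
    · exact Or.inr (le_antisymm hy.2 (le_trans (M.cm_le_cm' h hj) (M.cm_le_cp j hj)))

end MarkovSystem

end Aux
section Aux2

open Set

namespace MarkovSystem

variable {n : ℕ} {M : MarkovSystem n}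

lemma Epart_subset_itv {k : ℕ} (hk1 : 1 ≤ k) (hk : k < n) : M.Epart k ⊆ M.itv := by
  intro y hy
  exact ⟨(M.cm_le_cm' (Nat.zero_le k) hk.le).trans hy.1.le,
    hy.2.le.trans (M.cp_lt_cm' hk (le_refl n)).le⟩

lemma Epart_disjoint_Ipart {k j : ℕ} (hk1 : 1 ≤ k) (hk : k < n) (hj : j < n)
    {y : ℝ} (hyE : y ∈ M.Epart k) (hyI : y ∈ M.Ipart j) : False := by
  rcases Nat.lt_or_ge j k with h | h
  · exact absurd (hyI.2.trans (M.cm_le_cm' (by omega) hk.le)) (not_le.mpr hyE.1)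
  · exact absurd ((M.cp_le_cp' h hj.le).trans hyI.1) (not_le.mpr hyE.2)

lemma Epart_not_mem_dom {k : ℕ} (hk1 : 1 ≤ k) (hk : k < n) {y : ℝ}
    (hyE : y ∈ M.Epart k) : y ∉ M.dom := by
  intro hy
  rcases (M.mem_dom_iff).mp hy with ⟨j, hj, hyj⟩
  exact Epart_disjoint_Ipart hk1 hk hj hyE hyj

lemma Epart_eq_of_mem {k k' : ℕ} (hk1 : 1 ≤ k) (hk : k < n) (hk1' : 1 ≤ k') (hk' : k' < n)
    {y : ℝ} (h : y ∈ M.Epart k) (h' : y ∈ M.Epart k') : k = k' := by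
  by_contra hne
  rcases Nat.lt_or_ge k k' with hlt | hge
  · exact absurd (h.2.trans_le (M.cp_lt_cm' hlt hk'.le).le) (not_lt.mpr h'.1.le)
  · have hlt : k' < k := by omega
    exact absurd (h'.2.trans_le (M.cp_lt_cm' hlt hk.le).le) (not_lt.mpr h.1.le)

lemma Gamma_not_mem_Epart {k : ℕ} (hk1 : 1 ≤ k) (hk : k < n) {y : ℝ}
    (hg : y ∈ M.Gamma) (hy : y ∈ M.Epart k) : False :=
  Epart_not_mem_dom hk1 hk hy (M.Gamma_subset_dom hg)

/-- The image of an endpoint of `I_i` under the branch `F i` is in `Γ`. -/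
lemma image_endpoint_mem_Gamma (hM : IsMarkov M) {i : ℕ} (hi : i < n) {w : ℝ}
    (hw : w ∈ M.Ipart i) (hend : w = M.cp i ∨ w = M.cm (i+1)) :
    M.F i w ∈ M.Gamma := by
  obtain ⟨S, Tt, hS, hTt, hdec⟩ := hM.markov i hi
  -- extremality of F i w in the image
  have hmem : M.F i w ∈ M.F i '' M.Ipart i := Set.mem_image_of_mem _ hw
  have hext : (∀ y ∈ M.F i '' M.Ipart i, y ≤ M.F i w) ∨
      (∀ y ∈ M.F i '' M.Ipart i, M.F i w ≤ y) := by
    rcases hM.mono i hi with hmon | hant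
    · rcases hend with rfl | rfl
      · refine Or.inr ?_
        rintro y ⟨t, ht, rfl⟩
        exact hmon.monotoneOn (M.cp_mem_Ipart hi) ht ht.1
      · refine Or.inl ?_
        rintro y ⟨t, ht, rfl⟩
        exact hmon.monotoneOn ht (M.cm_mem_Ipart hi) ht.2
    · rcases hend with rfl | rfl
      · refine Or.inl ?_
        rintro y ⟨t, ht, rfl⟩
        exact hant.antitoneOn (M.cp_mem_Ipart hi) ht ht.1
      · refine Or.inr ?_
        rintro y ⟨t, ht, rfl⟩
        exact hant.antitoneOn ht (M.cm_mem_Ipart hi) ht.2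
  rw [hdec] at hmem
  rcases hmem with hmem | hmem
  · -- in some Ipart j
    rcases Set.mem_iUnion₂.mp hmem with ⟨j, hjS, hyj⟩
    have hjn : j < n := hS hjS
    have hIsub : M.Ipart j ⊆ M.F i '' M.Ipart i := by
      rw [hdec]; intro t ht; exact Or.inl (Set.mem_biUnion hjS ht)
    rcases hext with hmax | hmin
    · have : M.F i w = M.cm (j+1) :=
        le_antisymm hyj.2 (hmax _ (hIsub (M.cm_mem_Ipart hjn)))
      rw [this]; exact M.cm_mem_Gamma (by omega)
    · have : M.F i w = M.cp j :=
        le_antisymm (hmin _ (hIsub (M.cp_mem_Ipart hjn))) hyj.1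
      rw [this]; exact M.cp_mem_Gamma (by omega)
  · -- in some Epart k : contradiction with extremality
    exfalso
    rcases Set.mem_iUnion₂.mp hmem with ⟨k, hkT, hyk⟩
    obtain ⟨hk1, hkn⟩ := hTt hkT
    have hEsub : M.Epart k ⊆ M.F i '' M.Ipart i := by
      rw [hdec]; intro t ht; exact Or.inr (Set.mem_biUnion hkT ht)
    rcases hext with hmax | hmin
    · obtain ⟨y, hy1, hy2⟩ : ∃ y, M.F i w < y ∧ y < M.cp k :=
        ⟨(M.F i w + M.cp k) / 2, by linarith [hyk.2], by linarith [hyk.2]⟩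
      exact absurd (hmax y (hEsub ⟨hyk.1.trans hy1, hy2⟩)) (not_le.mpr hy1)
    · obtain ⟨y, hy1, hy2⟩ : ∃ y, M.cm k < y ∧ y < M.F i w :=
        ⟨(M.cm k + M.F i w) / 2, by linarith [hyk.1], by linarith [hyk.1]⟩
      exact absurd (hmin y (hEsub ⟨hy1, hy2.trans hyk.2⟩)) (not_le.mpr hy2)

lemma f_eq_F (hM : IsMarkov M) {j : ℕ} (hj : j < n) {y : ℝ} (hy : y ∈ M.Ipart j)
    (hyg : y ∉ M.Gamma) : M.f y = M.F j y := by
  refine hM.compat₁ j hj y hy ?_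
  intro k hk hkj hyk
  exact hyg (M.mem_Gamma_of_mem_two_Iparts hk hj hkj hyk hy)

lemma f_gamma (hM : IsMarkov M) {y : ℝ} (hy : y ∈ M.Gamma) : M.f y ∈ M.Gamma := by
  obtain ⟨k, hkn, hyk, hfk⟩ := hM.compat₂ y (M.Gamma_subset_dom hy)
  rw [hfk]
  exact image_endpoint_mem_Gamma hM hkn hyk (M.gamma_endpoint hkn hy hyk)

lemma iterate_gamma (hM : IsMarkov M) {y : ℝ} (hy : y ∈ M.Gamma) (l : ℕ) :
    M.f^[l] y ∈ M.Gamma := by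
  induction l with
  | zero => simpa using hy
  | succ l ih => rw [Function.iterate_succ_apply']; exact f_gamma hM ih

end MarkovSystem

end Aux2
section Aux3

open Set

namespace MarkovSystem

variable {n : ℕ} {M : MarkovSystem n}

lemma rrel_refl (y : ℝ) : M.Rrel y y :=
  ⟨0, 0, by intro l hl; omega, by intro l hl; omega, rfl⟩

lemma rrel_symm {y z : ℝ} (h : M.Rrel y z) : M.Rrel z y := by
  obtain ⟨p, q, hp, hq, heq⟩ := h
  exact ⟨q, p, hq, hp, heq.symm⟩

lemma rrel_trans {a b c : ℝ} (h1 : M.Rrel a b) (h2 : M.Rrel b c) : M.Rrel a c := by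
  obtain ⟨p, q, hp, hq, heq⟩ := h1
  obtain ⟨q', p', hq', hp', heq'⟩ := h2
  rcases le_or_gt q q' with h | h
  · refine ⟨p + (q' - q), p', ?_, hp', ?_⟩
    · intro l hl
      rcases Nat.lt_or_ge l p with hlp | hlp
      · exact hp l hlp
      · have hkey := congrArg (M.f^[l - p]) heq
        rw [← Function.iterate_add_apply, ← Function.iterate_add_apply] at hkey
        rw [show l - p + p = l by omega] at hkey
        rw [hkey]
        exact hq' _ (by omega)
    · have hkey := congrArg (M.f^[q' - q]) heq
      rw [← Function.iterate_add_apply, ← Function.iterate_add_apply] at hkey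
      rw [show q' - q + q = q' by omega] at hkey
      rw [show p + (q' - q) = q' - q + p by omega, hkey, heq']
  · refine ⟨p, p' + (q - q'), hp, ?_, ?_⟩
    · intro l hl
      rcases Nat.lt_or_ge l p' with hlp | hlp
      · exact hp' l hlp
      · have hkey := congrArg (M.f^[l - p']) heq'
        rw [← Function.iterate_add_apply, ← Function.iterate_add_apply] at hkey
        rw [show l - p' + p' = l by omega] at hkey
        rw [← hkey]
        exact hq _ (by omega)
    · have hkey := congrArg (M.f^[q - q']) heq'
      rw [← Function.iterate_add_apply, ← Function.iterate_add_apply] at hkey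
      rw [show q - q' + q' = q by omega] at hkey
      rw [heq, show p' + (q - q') = q - q' + p' by omega, ← hkey]

lemma rrel_fwd {x u : ℝ} (h : M.Rrel x u) (hu : u ∈ M.dom) : M.Rrel x (M.f u) := by
  obtain ⟨p, q, hp, hq, heq⟩ := h
  cases q with
  | zero =>
    refine ⟨p + 1, 0, ?_, by intro l hl; omega, ?_⟩
    · intro l hl
      rcases Nat.lt_or_ge l p with hlp | hlp
      · exact hp l hlp
      · have : l = p := by omega
        rw [this, heq]; simpa using hu
    · rw [Function.iterate_succ_apply', heq]; simp
  | succ q' =>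
    refine ⟨p, q', ?_, ?_⟩
    · exact hp
    constructor
    · intro l hl
      rw [← Function.iterate_succ_apply]
      exact hq (l+1) (by omega)
    · rw [← Function.iterate_succ_apply]
      exact heq

lemma rrel_back {x u w : ℝ} (h : M.Rrel x u) (hw : M.f w = u) (hwd : w ∈ M.dom) :
    M.Rrel x w := by
  obtain ⟨p, q, hp, hq, heq⟩ := h
  refine ⟨p, q + 1, hp, ?_, ?_⟩
  · intro l hl
    cases l with
    | zero => simpa using hwd
    | succ l' =>
      rw [Function.iterate_succ_apply, hw]
      exact hq l' (by omega)
  · rw [Function.iterate_succ_apply, hw]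
    exact heq

variable (M) in
lemma esc_spec {x : ℝ} (hx : x ∈ M.Esc) :
    (M.f^[M.tau x] x ∉ M.dom) ∧ (∀ l < M.tau x, M.f^[l] x ∈ M.dom) := by
  have hne : {k | M.f^[k] x ∉ M.dom}.Nonempty := by
    by_contra hcon
    rw [Set.not_nonempty_iff_eq_empty] at hcon
    refine hx.2 ⟨hx.1, fun k => ?_⟩
    by_contra hk
    have hmem : k ∈ {k | M.f^[k] x ∉ M.dom} := hk
    rw [hcon] at hmem
    exact hmem
  constructor
  · exact Nat.sInf_mem hne
  · intro l hl
    by_contra hld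
    exact absurd (Nat.sInf_le (show l ∈ {k | M.f^[k] x ∉ M.dom} from hld)) (not_le.mpr hl)

lemma e_not_mem_dom {x : ℝ} (hx : x ∈ M.Esc) : M.e x ∉ M.dom := (esc_spec M hx).1

lemma rrel_e {x : ℝ} (hx : x ∈ M.Esc) : M.Rrel x (M.e x) :=
  ⟨M.tau x, 0, (esc_spec M hx).2, by intro l hl; omega, rfl⟩

/-- No point of `Γ` is `R`-related to an escaping point. -/
lemma gamma_not_rrel (hM : IsMarkov M) {x : ℝ} (hx : x ∈ M.Esc) {γ : ℝ}
    (hγ : γ ∈ M.Gamma) : ¬ M.Rrel x γ := by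
  rintro ⟨p, q, hp, hq, heq⟩
  have hτ := esc_spec M hx
  rcases le_or_gt p (M.tau x) with h | h
  · refine hτ.1 ?_
    have hkey := congrArg (M.f^[M.tau x - p]) heq
    rw [← Function.iterate_add_apply, ← Function.iterate_add_apply] at hkey
    rw [show M.tau x - p + p = M.tau x by omega] at hkey
    rw [hkey]
    exact M.Gamma_subset_dom (iterate_gamma hM hγ _)
  · exact hτ.1 (hp _ h)

/-- Points of the orbit class avoid `Γ`. -/
lemma rclass_not_gamma (hM : IsMarkov M) {x : ℝ} (hx : x ∈ M.Esc) {y : ℝ}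
    (hy : y ∈ M.Rclass x) : y ∉ M.Gamma := fun hg => gamma_not_rrel hM hx hg hy.2

/-- Uniqueness of the escape representative in an orbit class. -/
lemma escape_unique (hx : x ∈ M.Esc) {y : ℝ} (hy : M.Rrel x y) (hyd : y ∉ M.dom) :
    y = M.e x := by
  obtain ⟨p, q, hp, hq, heq⟩ := hy
  have hq0 : q = 0 := by
    by_contra hq0
    exact hyd (by simpa using hq 0 (by omega))
  subst hq0
  simp only [Function.iterate_zero_apply] at heq
  have hτ := esc_spec M hx
  have hle : M.tau x ≤ p := by
    by_contra hcon
    exact absurd (hτ.2 p (by omega)) (heq ▸ hyd)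
  have hge : p ≤ M.tau x := by
    by_contra hcon
    exact hτ.1 (hp _ (by omega))
  have : p = M.tau x := by omega
  rw [← heq, e, ← this]

/-- (No bad points.)  The branch preimage of a point of the orbit class lies in
the orbit class. -/
lemma preimage_mem_rclass (hM : IsMarkov M) {x : ℝ} (hx : x ∈ M.Esc) {j : ℕ}
    (hj : j < n) {z : ℝ} (hz : z ∈ M.Rclass x) {w : ℝ} (hw : w ∈ M.Ipart j)
    (hFw : M.F j w = z) : w ∈ M.Rclass x := by
  have hwitv : w ∈ M.itv := M.Ipart_subset_itv hj hw
  by_cases hg : w ∈ M.Gamma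
  · exfalso
    have : z ∈ M.Gamma := hFw ▸ image_endpoint_mem_Gamma hM hj hw (M.gamma_endpoint hj hg hw)
    exact gamma_not_rrel hM hx this hz.2
  · have hfw : M.f w = z := by rw [f_eq_F hM hj hw hg, hFw]
    exact ⟨hwitv, rrel_back hz.2 hfw (M.Ipart_subset_dom hj hw)⟩

/-- Forward image of an orbit-class point under its branch stays in the class. -/
lemma fwd_mem_rclass (hM : IsMarkov M) {x : ℝ} (hx : x ∈ M.Esc) {j : ℕ}
    (hj : j < n) {v : ℝ} (hv : v ∈ M.Rclass x) (hvI : v ∈ M.Ipart j) :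
    M.F j v ∈ M.Rclass x := by
  have hg : v ∉ M.Gamma := rclass_not_gamma hM hx hv
  have hfv : M.f v = M.F j v := f_eq_F hM hj hvI hg
  refine ⟨hM.maps_into j hj (Set.mem_image_of_mem _ hvI), ?_⟩
  rw [← hfv]
  exact rrel_fwd hv.2 (M.Ipart_subset_dom hj hvI)

end MarkovSystem

end Aux3
section Aux4

open Set

namespace MarkovSystem

variable {n : ℕ} {M : MarkovSystem n}

lemma F_injOn (hM : IsMarkov M) {i : ℕ} (hi : i < n) : Set.InjOn (M.F i) (M.Ipart i) := by
  rcases hM.mono i hi with h | h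
  · exact h.injOn
  · exact h.injOn

lemma F_contOn (hM : IsMarkov M) {i : ℕ} (hi : i < n) : ContinuousOn (M.F i) (M.Ipart i) :=
  fun y hy => (hM.deriv i hi y hy).continuousWithinAt

/-- Decomposition cases of the branch image. -/
lemma mem_image_cases (hM : IsMarkov M) {i : ℕ} (hi : i < n) {u : ℝ}
    (hu : u ∈ M.F i '' M.Ipart i) :
    (∃ j < n, u ∈ M.Ipart j ∧ M.Ipart j ⊆ M.F i '' M.Ipart i) ∨
    (∃ k, 1 ≤ k ∧ k < n ∧ u ∈ M.Epart k ∧ M.Epart k ⊆ M.F i '' M.Ipart i) := by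
  obtain ⟨S, Tt, hS, hTt, hdec⟩ := hM.markov i hi
  rw [hdec] at hu
  rcases hu with hu | hu
  · rcases Set.mem_iUnion₂.mp hu with ⟨j, hjS, hyj⟩
    refine Or.inl ⟨j, hS hjS, hyj, ?_⟩
    rw [hdec]; intro t ht; exact Or.inl (Set.mem_biUnion hjS ht)
  · rcases Set.mem_iUnion₂.mp hu with ⟨k, hkT, hyk⟩
    refine Or.inr ⟨k, (hTt hkT).1, (hTt hkT).2, hyk, ?_⟩
    rw [hdec]; intro t ht; exact Or.inr (Set.mem_biUnion hkT ht)

/-- If a Markov interval is contained in a branch image, the corresponding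
transition holds. -/
lemma trans_of_subset (hM : IsMarkov M) {i j : ℕ} (hi : i < n) (hj : j < n)
    (h : M.Ipart j ⊆ M.F i '' M.Ipart i) : M.trans i j := by
  have hab : M.cp i < M.cm (i+1) := M.cp_lt_cm i hi
  have hcont := F_contOn hM hi
  intro y hy
  rw [Ipart, interior_Icc] at hy ⊢
  have hcpj : M.cp j ∈ M.F i '' M.Ipart i := h (M.cp_mem_Ipart hj)
  have hcmj : M.cm (j+1) ∈ M.F i '' M.Ipart i := h (M.cm_mem_Ipart hj)
  rcases hM.mono i hi with hmon | hant
  · have hbound : ∀ z ∈ M.F i '' M.Ipart i,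
        M.F i (M.cp i) ≤ z ∧ z ≤ M.F i (M.cm (i+1)) := by
      rintro z ⟨t, ht, rfl⟩
      exact ⟨hmon.monotoneOn (M.cp_mem_Ipart hi) ht ht.1,
        hmon.monotoneOn ht (M.cm_mem_Ipart hi) ht.2⟩
    have h1 : M.F i (M.cp i) ≤ M.cp j := (hbound _ hcpj).1
    have h2 : M.cm (j+1) ≤ M.F i (M.cm (i+1)) := (hbound _ hcmj).2
    have hyI : y ∈ Set.Icc (M.F i (M.cp i)) (M.F i (M.cm (i+1))) :=
      ⟨h1.trans hy.1.le, hy.2.le.trans h2⟩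
    obtain ⟨t, ht, hty⟩ := intermediate_value_Icc hab.le hcont hyI
    refine ⟨t, ?_, hty⟩
    constructor
    · rcases eq_or_lt_of_le ht.1 with heq | hlt
      · exfalso; rw [← heq] at hty; rw [hty] at h1
        exact absurd (h1.trans_lt hy.1) (lt_irrefl _)
      · exact hlt
    · rcases eq_or_lt_of_le ht.2 with heq | hlt
      · exfalso; rw [heq] at hty; rw [hty] at h2
        exact absurd (hy.2.trans_le h2) (lt_irrefl _)
      · exact hlt
  · have hbound : ∀ z ∈ M.F i '' M.Ipart i,
        M.F i (M.cm (i+1)) ≤ z ∧ z ≤ M.F i (M.cp i) := by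
      rintro z ⟨t, ht, rfl⟩
      exact ⟨hant.antitoneOn ht (M.cm_mem_Ipart hi) ht.2,
        hant.antitoneOn (M.cp_mem_Ipart hi) ht ht.1⟩
    have h1 : M.F i (M.cm (i+1)) ≤ M.cp j := (hbound _ hcpj).1
    have h2 : M.cm (j+1) ≤ M.F i (M.cp i) := (hbound _ hcmj).2
    have hyI : y ∈ Set.Icc (M.F i (M.cm (i+1))) (M.F i (M.cp i)) :=
      ⟨h1.trans hy.1.le, hy.2.le.trans h2⟩
    obtain ⟨t, ht, hty⟩ := intermediate_value_Icc' hab.le hcont hyI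
    refine ⟨t, ?_, hty⟩
    constructor
    · rcases eq_or_lt_of_le ht.1 with heq | hlt
      · exfalso; rw [← heq] at hty; rw [hty] at h2
        exact absurd (hy.2.trans_le h2) (lt_irrefl _)
      · exact hlt
    · rcases eq_or_lt_of_le ht.2 with heq | hlt
      · exfalso; rw [heq] at hty; rw [hty] at h1
        exact absurd (h1.trans_lt hy.1) (lt_irrefl _)
      · exact hlt

/-- Extraction of a defined orbit from the iterated image. -/
lemma iterImage_spec {q : ℕ} {S : Set ℝ} {y : ℝ} (hy : y ∈ M.iterImage q S) :
    ∃ y0 ∈ S, M.definedUpTo q y0 ∧ M.f^[q] y0 = y := by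
  induction q generalizing y with
  | zero => exact ⟨y, hy, by intro l hl; omega, rfl⟩
  | succ q ih =>
    obtain ⟨w, ⟨hw1, hw2⟩, rfl⟩ := hy
    obtain ⟨y0, hy0S, hy0d, hy0q⟩ := ih hw1
    refine ⟨y0, hy0S, ?_, ?_⟩
    · intro l hl
      rcases Nat.lt_or_ge l q with h | h
      · exact hy0d l h
      · have : l = q := by omega
        rw [this, hy0q]; exact hw2
    · rw [Function.iterate_succ_apply', hy0q]

/-- Construction of the preimage of the escape point in `I_i`. -/
lemma exists_pre_e (hM : IsMarkov M) {x : ℝ} (hx : x ∈ M.Esc) {j0 : ℕ}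
    (hj0 : 1 ≤ j0 ∧ j0 < n) (hex : M.e x ∈ M.Epart j0) {i : ℕ} (hi : i < n)
    (hai : M.ahat i j0) :
    ∃ z, z ∈ M.Ipart i ∧ z ∉ M.Gamma ∧ M.F i z = M.e x ∧ z ∈ M.Rclass x := by
  obtain ⟨w0, hw0i, hw0E⟩ := hai
  have hw0I : w0 ∈ M.Ipart i := interior_subset hw0i
  have hw0im : M.F i w0 ∈ M.F i '' M.Ipart i := Set.mem_image_of_mem _ hw0I
  have hEsub : M.Epart j0 ⊆ M.F i '' M.Ipart i := by
    rcases mem_image_cases hM hi hw0im with ⟨j, hj, hj1, _⟩ | ⟨k, hk1, hkn, hk2, hk3⟩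
    · exact absurd hj1 (fun hc => M.Epart_disjoint_Ipart hj0.1 hj0.2 hj hw0E hc)
    · have : k = j0 := M.Epart_eq_of_mem hk1 hkn hj0.1 hj0.2 hk2 hw0E
      rw [← this]; exact hk3
  obtain ⟨z, hzI, hzF⟩ := hEsub hex
  have hzg : z ∉ M.Gamma := by
    intro hg
    have : M.F i z ∈ M.Gamma :=
      image_endpoint_mem_Gamma hM hi hzI (M.gamma_endpoint hi hg hzI)
    exact M.Gamma_not_mem_Epart hj0.1 hj0.2 this (hzF ▸ hex)
  have hfz : M.f z = M.e x := by rw [f_eq_F hM hi hzI hzg, hzF]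
  refine ⟨z, hzI, hzg, hzF, M.Ipart_subset_itv hi hzI, ?_⟩
  exact rrel_back (rrel_e hx) hfz (M.Ipart_subset_dom hi hzI)

lemma e_mem_rclass {x : ℝ} (hx : x ∈ M.Esc) {j0 : ℕ} (hj0 : 1 ≤ j0 ∧ j0 < n)
    (hex : M.e x ∈ M.Epart j0) : M.e x ∈ M.Rclass x :=
  ⟨M.Epart_subset_itv hj0.1 hj0.2 hex, rrel_e hx⟩

end MarkovSystem

end Aux4
section Aux5

open Set

namespace MarkovSystem

set_option synthInstance.maxHeartbeats 1000000

variable {n : ℕ} {M : MarkovSystem n} {x : ℝ}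

local notation "⟪" a ", " b "⟫" => @inner ℂ _ _ a b

lemma dvec_apply (z w : M.Rclass x) :
    (M.dvec z : ∀ _ : M.Rclass x, ℂ) w = if w = z then 1 else 0 := by
  rw [dvec, lp.single_apply]
  split_ifs with h
  · subst h; simp
  · simp [Pi.single_apply, h]

lemma dvec_ne_zero (z : M.Rclass x) : M.dvec z ≠ 0 := by
  intro h
  have h1 : (M.dvec z : ∀ _ : M.Rclass x, ℂ) z = 1 := by
    rw [dvec_apply]; simp
  rw [h] at h1
  simp [lp.coeFn_zero] at h1

lemma inner_dvec_left (z : M.Rclass x) (v : M.Hsp x) :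
    ⟪M.dvec z, v⟫ = v z := by
  rw [dvec, lp.inner_single_left]
  simp

lemma apply_eq_inner (v : M.Hsp x) (w : M.Rclass x) : v w = ⟪M.dvec w, v⟫ :=
  (inner_dvec_left w v).symm

/-- Coordinates of the adjoint applied to a vector. -/
lemma star_apply_coord (A : M.Hsp x →L[ℂ] M.Hsp x) (v : M.Hsp x) (w : M.Rclass x) :
    ((star A) v) w = ⟪A (M.dvec w), v⟫ := by
  rw [apply_eq_inner, ContinuousLinearMap.star_eq_adjoint,
    ContinuousLinearMap.adjoint_inner_right]

/-- Two operators agreeing on the basis vectors agree. -/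
lemma ext_dvec {A B : M.Hsp x →L[ℂ] M.Hsp x}
    (h : ∀ z : M.Rclass x, A (M.dvec z) = B (M.dvec z)) : A = B := by
  have hdense : Dense (Submodule.span ℂ (Set.range (M.dvec : M.Rclass x → M.Hsp x)) :
      Set (M.Hsp x)) := by
    intro v
    have hsum : HasSum (fun z : M.Rclass x => lp.single 2 z (v z)) v :=
      lp.hasSum_single (by norm_num) v
    refine mem_closure_of_tendsto hsum (Filter.Eventually.of_forall ?_)
    intro s
    refine Submodule.sum_mem _ ?_
    intro z _
    have : lp.single 2 z (v z) = (v z) • M.dvec z := by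
      rw [dvec, ← lp.single_smul]
      congr 1
      simp
    rw [this]
    exact Submodule.smul_mem _ _ (Submodule.subset_span ⟨z, rfl⟩)
  refine ContinuousLinearMap.ext_on hdense ?_
  rintro _ ⟨z, rfl⟩
  exact h z

end MarkovSystem

end Aux5
section Aux6

open Set

namespace MarkovSystem

set_option synthInstance.maxHeartbeats 1000000
set_option maxHeartbeats 1000000

variable {n : ℕ} {M : MarkovSystem n} {x : ℝ}

local notation "⟪" a ", " b "⟫" => @inner ℂ _ _ a b

lemma branch_apply (hM : IsMarkov M) (hx : x ∈ M.Esc) {i : ℕ} (hi : i < n)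
    {Ti : M.Hsp x →L[ℂ] M.Hsp x} (hTi : M.IsBranchOp x i Ti) (u : M.Rclass x)
    (hu : (u : ℝ) ∈ M.F i '' M.Ipart i) :
    ∃ w : M.Rclass x, (w : ℝ) ∈ M.Ipart i ∧ M.F i w = (u : ℝ) ∧
      Ti (M.dvec u) = M.dvec w := by
  obtain ⟨w, hwI, hwF⟩ := hu
  have hwR : w ∈ M.Rclass x := preimage_mem_rclass hM hx hi u.2 hwI hwF
  exact ⟨⟨w, hwR⟩, hwI, hwF, hTi.1 u ⟨w, hwR⟩ hwI hwF⟩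

lemma star_branch_apply (hM : IsMarkov M) (hx : x ∈ M.Esc) {i : ℕ} (hi : i < n)
    {Ti : M.Hsp x →L[ℂ] M.Hsp x} (hTi : M.IsBranchOp x i Ti) (v : M.Rclass x) :
    (star Ti) (M.dvec v) =
      if h : (v : ℝ) ∈ M.Ipart i then
        M.dvec ⟨M.F i v, fwd_mem_rclass hM hx hi v.2 h⟩ else 0 := by
  by_cases hv : (v : ℝ) ∈ M.Ipart i
  · rw [dif_pos hv]
    apply lp.ext
    funext u
    rw [star_apply_coord]
    by_cases hu : (u : ℝ) ∈ M.F i '' M.Ipart i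
    · obtain ⟨w, hwI, hwF, hTu⟩ := branch_apply hM hx hi hTi u hu
      rw [hTu, inner_dvec_left, dvec_apply, dvec_apply]
      by_cases h1 : w = v
      · rw [if_pos h1, if_pos (Subtype.ext (by rw [← hwF, h1]))]
      · rw [if_neg h1, if_neg ?_]
        intro hc
        refine h1 (Subtype.ext (F_injOn hM hi hwI hv ?_))
        rw [hwF]
        exact congrArg Subtype.val hc
    · rw [hTi.2 u hu, inner_zero_left, dvec_apply, if_neg ?_]
      intro hc
      refine hu ?_
      rw [show (u : ℝ) = M.F i v from congrArg Subtype.val hc]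
      exact Set.mem_image_of_mem _ hv
  · rw [dif_neg hv]
    apply lp.ext
    funext u
    rw [star_apply_coord]
    have hz : ⟪Ti (M.dvec u), M.dvec v⟫ = 0 := by
      by_cases hu : (u : ℝ) ∈ M.F i '' M.Ipart i
      · obtain ⟨w, hwI, hwF, hTu⟩ := branch_apply hM hx hi hTi u hu
        rw [hTu, inner_dvec_left, dvec_apply, if_neg ?_]
        intro h1
        exact hv (by rw [← show (w : ℝ) = v from congrArg Subtype.val h1]; exact hwI)
      · rw [hTi.2 u hu, inner_zero_left]
    rw [hz]
    simp [lp.coeFn_zero]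

lemma P_flat (hM : IsMarkov M) (hx : x ∈ M.Esc) {j : ℕ} (hj : j < n)
    {Tj : M.Hsp x →L[ℂ] M.Hsp x} (hTj : M.IsBranchOp x j Tj) (u : M.Rclass x) :
    Tj ((star Tj) (M.dvec u)) = if (u : ℝ) ∈ M.Ipart j then M.dvec u else 0 := by
  rw [star_branch_apply hM hx hj hTj u]
  by_cases hu : (u : ℝ) ∈ M.Ipart j
  · rw [dif_pos hu, if_pos hu]
    exact hTj.1 _ u hu rfl
  · rw [dif_neg hu, if_neg hu, map_zero]

end MarkovSystem

end Aux6
set_option synthInstance.maxHeartbeats 1000000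
set_option maxHeartbeats 2000000

/-- Gap projection identity of Theorem 3.2(1b): if `â_{i,ι(x)} = 1`, then
`P_i − ∑_{j : a_{ij}=1} S_{ij} S_{ij}* = T_i P_{e(x)} T_i*`, the rank-one
orthogonal projection onto `ℂ δ_z` with `z = (f|_{I_i})⁻¹(e(x))`; in particular
the gap projection is nonzero, and `∑_{j : a_{ij}=1} S_{ij} S_{ij}* ≠ 0`. -/
theorem gap_projection_identity {n : ℕ} (M : MarkovSystem n) (hM : IsMarkov M)
    {x : ℝ} (hx : x ∈ M.Esc) {j0 : ℕ} (hj0 : 1 ≤ j0 ∧ j0 < n)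
    (hex : M.e x ∈ M.Epart j0) {i : ℕ} (hi : i < n) (hai : M.ahat i j0)
    (T : ℕ → (M.Hsp x →L[ℂ] M.Hsp x)) (hT : ∀ i < n, M.IsBranchOp x i (T i))
    (Pe : M.Hsp x →L[ℂ] M.Hsp x) (hPe : M.IsEscProj x Pe) :
    T i * star (T i) -
      (∑ j ∈ Finset.range n, if M.trans i j then
        (T i * (T j * star (T j))) * star (T i * (T j * star (T j))) else 0) =
      T i * Pe * star (T i) ∧
    (∃ z : M.Rclass x, (z : ℝ) ∈ M.Ipart i ∧ M.F i z = M.e x ∧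
      ∀ w : M.Rclass x, (T i * Pe * star (T i)) (M.dvec w) =
        if w = z then M.dvec z else 0) ∧
    T i * Pe * star (T i) ≠ 0 ∧
    (∑ j ∈ Finset.range n, if M.trans i j then
      (T i * (T j * star (T j))) * star (T i * (T j * star (T j))) else 0) ≠ 0 := by
  classical
  have hTi := hT i hi
  obtain ⟨z0, hz0I, hz0g, hz0F, hz0R⟩ := MarkovSystem.exists_pre_e hM hx hj0 hex hi hai
  set z : M.Rclass x := ⟨z0, hz0R⟩ with hzdef
  -- the action of `T i * Pe * star (T i)` on basis vectors
  have hRH : ∀ v : M.Rclass x, (T i * Pe * star (T i)) (M.dvec v) =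
      if ((v : ℝ) ∈ M.Ipart i ∧ M.F i v = M.e x) then M.dvec v else 0 := by
    intro v
    simp only [ContinuousLinearMap.mul_apply]
    rw [MarkovSystem.star_branch_apply hM hx hi hTi v]
    by_cases hv : (v : ℝ) ∈ M.Ipart i
    · rw [dif_pos hv, hPe]
      by_cases hFe : M.F i (v : ℝ) = M.e x
      · rw [if_pos hFe, hTi.1 _ v hv rfl, if_pos ⟨hv, hFe⟩]
      · rw [if_neg hFe, map_zero, if_neg (by tauto)]
    · rw [dif_neg hv]
      simp only [map_zero]
      rw [if_neg (by tauto)]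
  -- the action of each summand
  have hterm : ∀ j, j < n → ∀ v : M.Rclass x,
      (((T i * (T j * star (T j))) * star (T i * (T j * star (T j)))) (M.dvec v)) =
      if ((v : ℝ) ∈ M.Ipart i ∧ M.F i v ∈ M.Ipart j) then M.dvec v else 0 := by
    intro j hjn v
    have hTj := hT j hjn
    have hstar : star (T i * (T j * star (T j))) = (T j * star (T j)) * star (T i) := by
      rw [star_mul, star_mul, star_star]
    rw [hstar]
    simp only [ContinuousLinearMap.mul_apply]
    rw [MarkovSystem.star_branch_apply hM hx hi hTi v]
    by_cases hv : (v : ℝ) ∈ M.Ipart i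
    · rw [dif_pos hv]
      rw [MarkovSystem.P_flat hM hx hjn hTj]
      by_cases hu : M.F i (v : ℝ) ∈ M.Ipart j
      · rw [if_pos hu]
        rw [MarkovSystem.P_flat hM hx hjn hTj, if_pos hu, hTi.1 _ v hv rfl,
          if_pos ⟨hv, hu⟩]
      · rw [if_neg hu]
        simp only [map_zero]
        rw [if_neg (by tauto)]
    · rw [dif_neg hv]
      simp only [map_zero]
      rw [if_neg (by tauto)]
  -- the action of `T i * star (T i)`
  have hTT : ∀ v : M.Rclass x, (T i * star (T i)) (M.dvec v) =
      if (v : ℝ) ∈ M.Ipart i then M.dvec v else 0 := by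
    intro v
    rw [ContinuousLinearMap.mul_apply]
    exact MarkovSystem.P_flat hM hx hi hTi v
  -- the action of the sum
  have hSum : ∀ v : M.Rclass x,
      (∑ j ∈ Finset.range n, if M.trans i j then
        (T i * (T j * star (T j))) * star (T i * (T j * star (T j))) else 0)
        (M.dvec v) =
      if ((v : ℝ) ∈ M.Ipart i ∧ M.F i v ≠ M.e x) then M.dvec v else 0 := by
    intro v
    rw [ContinuousLinearMap.sum_apply]
    by_cases hv : (v : ℝ) ∈ M.Ipart i
    · by_cases hne : M.F i (v : ℝ) = M.e x
      · rw [if_neg (by tauto)]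
        refine Finset.sum_eq_zero ?_
        intro j hjr
        have hjn : j < n := Finset.mem_range.mp hjr
        by_cases htr : M.trans i j
        · rw [if_pos htr, hterm j hjn v, if_neg ?_]
          rintro ⟨-, hFm⟩
          exact MarkovSystem.e_not_mem_dom hx (M.Ipart_subset_dom hjn (hne ▸ hFm))
        · rw [if_neg htr]
          exact ContinuousLinearMap.zero_apply _
      · have huR : M.F i (v : ℝ) ∈ M.Rclass x :=
          MarkovSystem.fwd_mem_rclass hM hx hi v.2 hv
        have huim : M.F i (v : ℝ) ∈ M.F i '' M.Ipart i := Set.mem_image_of_mem _ hv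
        rcases MarkovSystem.mem_image_cases hM hi huim with
          ⟨js, hjsn, hjsmem, hjssub⟩ | ⟨k, hk1, hkn, hkE, -⟩
        · rw [if_pos ⟨hv, hne⟩]
          refine (Finset.sum_eq_single_of_mem js (Finset.mem_range.mpr hjsn) ?_).trans ?_
          · intro j hjr hne'
            have hjn : j < n := Finset.mem_range.mp hjr
            by_cases htr : M.trans i j
            · rw [if_pos htr, hterm j hjn v, if_neg ?_]
              rintro ⟨-, hmem⟩
              exact MarkovSystem.rclass_not_gamma hM hx huR
                (M.mem_Gamma_of_mem_two_Iparts hjn hjsn hne' hmem hjsmem)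
            · rw [if_neg htr]
              exact ContinuousLinearMap.zero_apply _
          · rw [if_pos (MarkovSystem.trans_of_subset hM hi hjsn hjssub),
              hterm js hjsn v, if_pos ⟨hv, hjsmem⟩]
        · exact absurd (MarkovSystem.escape_unique hx huR.2
            (MarkovSystem.Epart_not_mem_dom hk1 hkn hkE)) hne
    · rw [if_neg (by tauto)]
      refine Finset.sum_eq_zero ?_
      intro j hjr
      have hjn : j < n := Finset.mem_range.mp hjr
      by_cases htr : M.trans i j
      · rw [if_pos htr, hterm j hjn v, if_neg (by tauto)]
      · rw [if_neg htr]
        exact ContinuousLinearMap.zero_apply _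
  -- main identity
  have hmain : T i * star (T i) -
      (∑ j ∈ Finset.range n, if M.trans i j then
        (T i * (T j * star (T j))) * star (T i * (T j * star (T j))) else 0) =
      T i * Pe * star (T i) := by
    apply MarkovSystem.ext_dvec
    intro v
    rw [ContinuousLinearMap.sub_apply, hTT v, hSum v, hRH v]
    by_cases hv : (v : ℝ) ∈ M.Ipart i
    · by_cases hne : M.F i (v : ℝ) = M.e x
      · rw [if_pos hv, if_neg (by tauto), if_pos ⟨hv, hne⟩, sub_zero]
      · rw [if_pos hv, if_pos ⟨hv, hne⟩, if_neg (by tauto), sub_self]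
    · rw [if_neg hv, if_neg (by tauto), if_neg (by tauto), sub_zero]
  refine ⟨hmain, ⟨z, hz0I, hz0F, ?_⟩, ?_, ?_⟩
  · -- rank one projection description
    intro w
    rw [hRH w]
    by_cases hw : w = z
    · subst hw
      rw [if_pos ⟨hz0I, hz0F⟩, if_pos rfl]
    · rw [if_neg ?_, if_neg hw]
      rintro ⟨hwI, hwF⟩
      exact hw (Subtype.ext (MarkovSystem.F_injOn hM hi hwI hz0I (by rw [hwF, hz0F])))
  · -- nonvanishing of the gap projection
    intro h0
    have hz1 := hRH z
    rw [h0, if_pos ⟨hz0I, hz0F⟩, ContinuousLinearMap.zero_apply] at hz1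
    exact MarkovSystem.dvec_ne_zero z hz1.symm
  · -- nonvanishing of the sum
    obtain ⟨q, hq⟩ := hM.aperiodic i hi
    have hq0 : q ≠ 0 := by
      intro h0
      subst h0
      have hIi : M.dom ⊆ M.Ipart i := hq
      have h1 : M.cp i ≤ M.cp 0 :=
        (hIi (M.Ipart_subset_dom (show 0 < n by omega) (M.cp_mem_Ipart (by omega)))).1
      have hcmn : M.cm n ∈ M.Ipart (n - 1) := by
        rw [show M.cm n = M.cm (n - 1 + 1) by congr 1; omega]
        exact M.cm_mem_Ipart (by omega)
      have h2 : M.cm n ≤ M.cm (i + 1) :=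
        (hIi (M.Ipart_subset_dom (show n - 1 < n by omega) hcmn)).2
      have h3 : M.cp 0 < M.cm 1 := M.cp_lt_cm 0 (by omega)
      have h4 : M.cm 1 ≤ M.cm j0 := M.cm_le_cm' hj0.1 hj0.2.le
      have h5 : M.cp j0 < M.cm n := M.cp_lt_cm' hj0.2 (le_refl n)
      have hexI : M.e x ∈ M.Ipart i :=
        ⟨by linarith [hex.1], by linarith [hex.2]⟩
      exact MarkovSystem.e_not_mem_dom hx (M.Ipart_subset_dom hi hexI)
    have hz0dom : z0 ∈ M.dom := M.Ipart_subset_dom hi hz0I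
    obtain ⟨y0, hy0I, hy0d, hy0q⟩ := MarkovSystem.iterImage_spec (hq hz0dom)
    have hy0R : y0 ∈ M.Rclass x := by
      refine ⟨M.Ipart_subset_itv hi hy0I, ?_⟩
      refine MarkovSystem.rrel_trans hz0R.2 (MarkovSystem.rrel_symm ?_)
      exact ⟨q, 0, hy0d, by intro l hl; omega, by simpa using hy0q⟩
    have hy0g : y0 ∉ M.Gamma := MarkovSystem.rclass_not_gamma hM hx hy0R
    have hfy0dom : M.f y0 ∈ M.dom := by
      rcases Nat.lt_or_ge 1 q with h | h
      · simpa using hy0d 1 h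
      · have hq1 : q = 1 := by omega
        have : M.f y0 = z0 := by rw [← hy0q, hq1]; simp
        rw [this]
        exact hz0dom
    have hne : M.F i y0 ≠ M.e x := by
      rw [← MarkovSystem.f_eq_F hM hi hy0I hy0g]
      intro hcon
      exact MarkovSystem.e_not_mem_dom hx (hcon ▸ hfy0dom)
    intro hS0
    have hv1 := hSum ⟨y0, hy0R⟩
    rw [hS0, if_pos ⟨hy0I, hne⟩, ContinuousLinearMap.zero_apply] at hv1
    exact MarkovSystem.dvec_ne_zero _ hv1.symm
end
end

section
/- (Concrete content of Theorem 3.2(2).) Let f be a Markov interval map and x ∈ Λ_f = Ω_f ∖ R_f(Γ) a regular point. Then the operators T_i on H_x = ℓ²(R_f(x)) are partial isometries with pairwise orthogonal nonzero range projections P_i = T_i T_i* that satisfy the Cuntz–Krieger relations: T_i* T_i = Σ_{j=1}^n a_{ij} T_j T_j* for every i, and Σ_{i=1}^n T_i T_i* = 1. -/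
open scoped Classical ENNReal

noncomputable section

namespace CKAux
open MarkovSystem Set

variable {n : ℕ} {M : MarkovSystem n}

lemma chain (M : MarkovSystem n) : ∀ k ≤ n, ∀ j ≤ k,
    M.cm j ≤ M.cm k ∧ M.cp j ≤ M.cp k ∧ (j < k → M.cp j < M.cm k) := by
  intro k
  induction k with
  | zero =>
    intro _ j hj
    have : j = 0 := Nat.le_zero.mp hj
    subst this
    exact ⟨le_rfl, le_rfl, by omega⟩
  | succ k ih =>
    intro hk j hj
    rcases eq_or_lt_of_le hj with rfl | hj'
    · exact ⟨le_rfl, le_rfl, by omega⟩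
    · have hj2 : j ≤ k := by omega
      have hk' : k ≤ n := by omega
      obtain ⟨h1, h2, _⟩ := ih hk' j hj2
      have hcm : M.cm k ≤ M.cp k := M.cm_le_cp k hk'
      have hlt : M.cp k < M.cm (k + 1) := M.cp_lt_cm k (by omega)
      have hcp2 : M.cm (k + 1) ≤ M.cp (k + 1) := M.cm_le_cp (k + 1) hk
      exact ⟨le_trans h1 (le_trans hcm hlt.le),
        le_trans h2 (le_trans hlt.le hcp2),
        fun _ => lt_of_le_of_lt h2 hlt⟩

lemma cm_mono {j k : ℕ} (hj : j ≤ k) (hk : k ≤ n) : M.cm j ≤ M.cm k :=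
  (chain M k hk j hj).1

lemma cp_mono {j k : ℕ} (hj : j ≤ k) (hk : k ≤ n) : M.cp j ≤ M.cp k :=
  (chain M k hk j hj).2.1

lemma cp_lt_cm' {j k : ℕ} (hj : j < k) (hk : k ≤ n) : M.cp j < M.cm k :=
  (chain M k hk j hj.le).2.2 hj

lemma Ioo_not_Gamma {j : ℕ} (hj : j < n) {y : ℝ}
    (hy : y ∈ Set.Ioo (M.cp j) (M.cm (j + 1))) : y ∉ M.Gamma := by
  rintro ⟨k, hk, hor⟩
  rcases le_or_gt k j with hkj | hkj
  · have h1 : M.cp k ≤ M.cp j := cp_mono hkj (by omega)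
    have h2 : M.cm k ≤ M.cp k := M.cm_le_cp k (by omega)
    rcases hor with rfl | rfl
    · exact absurd hy.1 (by linarith)
    · exact absurd hy.1 (by linarith)
  · have h1 : M.cm (j + 1) ≤ M.cm k := cm_mono hkj hk
    have h2 : M.cm k ≤ M.cp k := M.cm_le_cp k hk
    rcases hor with rfl | rfl
    · exact absurd hy.2 (by linarith)
    · exact absurd hy.2 (by linarith)

lemma Ioo_not_Ipart {j k : ℕ} (hj : j < n) (hk : k < n) (hne : k ≠ j) {y : ℝ}
    (hy : y ∈ Set.Ioo (M.cp j) (M.cm (j + 1))) : y ∉ M.Ipart k := by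
  rintro ⟨h1, h2⟩
  rcases lt_or_gt_of_ne hne with hkj | hkj
  · -- k < j : y ≤ cm (k+1) ≤ cm j ≤ cp j < y
    have : M.cm (k + 1) ≤ M.cm j := cm_mono (by omega) (by omega)
    have : M.cm j ≤ M.cp j := M.cm_le_cp j (by omega)
    have := hy.1
    linarith
  · -- j < k : cm (j+1) ≤ cm k ≤ cp k ≤ y
    have : M.cm (j + 1) ≤ M.cm k := cm_mono (by omega) (by omega)
    have : M.cm k ≤ M.cp k := M.cm_le_cp k (by omega)
    have := hy.2
    linarith

lemma Ioo_not_Epart {j k : ℕ} (hj : j < n) (hk1 : 1 ≤ k) (hk : k < n) {y : ℝ}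
    (hy : y ∈ Set.Ioo (M.cp j) (M.cm (j + 1))) : y ∉ M.Epart k := by
  rintro ⟨h1, h2⟩
  rcases le_or_gt k j with hkj | hkj
  · have : M.cp k ≤ M.cp j := cp_mono hkj (by omega)
    have := hy.1
    linarith
  · have : M.cm (j + 1) ≤ M.cm k := cm_mono hkj (by omega)
    have := hy.2
    linarith

lemma Ipart_subset_itv {j : ℕ} (hj : j < n) : M.Ipart j ⊆ M.itv := by
  rintro y ⟨h1, h2⟩
  constructor
  · calc M.cm 0 = M.cp 0 := M.cm_zero
      _ ≤ M.cp j := cp_mono (by omega) (by omega)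
      _ ≤ y := h1
  · exact le_trans h2 (cm_mono (by omega) le_rfl)

lemma mem_dom_of_Ipart {j : ℕ} (hj : j < n) {y : ℝ} (hy : y ∈ M.Ipart j) :
    y ∈ M.dom := by
  exact Set.mem_iUnion₂.2 ⟨j, Finset.mem_range.2 hj, hy⟩

lemma cm_succ_mem_Ipart {j : ℕ} (hj : j < n) : M.cm (j + 1) ∈ M.Ipart j :=
  ⟨(M.cp_lt_cm j hj).le, le_rfl⟩

lemma cp_mem_Ipart {j : ℕ} (hj : j < n) : M.cp j ∈ M.Ipart j :=
  ⟨le_rfl, (M.cp_lt_cm j hj).le⟩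

end CKAux
namespace CKAux
open MarkovSystem Set

variable {n : ℕ} {M : MarkovSystem n}

lemma extreme_mem_Gamma (hM : IsMarkov M) {i : ℕ} (hi : i < n) {z : ℝ}
    (hz : z ∈ M.F i '' M.Ipart i)
    (hext : (∀ y ∈ M.F i '' M.Ipart i, y ≤ z) ∨ (∀ y ∈ M.F i '' M.Ipart i, z ≤ y)) :
    z ∈ M.Gamma := by
  obtain ⟨S, Tt, hS, hTt, heq⟩ := hM.markov i hi
  rw [heq] at hz
  rcases hz with hz | hz
  · -- z in an I-part
    obtain ⟨k, hkS, hzk⟩ := Set.mem_iUnion₂.1 hz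
    have hkn : k < n := hS hkS
    rcases hext with hub | hlb
    · -- z is max, so z = cm (k+1)
      have hmem : M.cm (k + 1) ∈ M.F i '' M.Ipart i := by
        rw [heq]
        exact Or.inl (Set.mem_iUnion₂.2 ⟨k, hkS, cm_succ_mem_Ipart hkn⟩)
      have h1 : M.cm (k + 1) ≤ z := hub _ hmem
      have h2 : z ≤ M.cm (k + 1) := hzk.2
      exact ⟨k + 1, by omega, Or.inl (le_antisymm h2 h1)⟩
    · have hmem : M.cp k ∈ M.F i '' M.Ipart i := by
        rw [heq]
        exact Or.inl (Set.mem_iUnion₂.2 ⟨k, hkS, cp_mem_Ipart hkn⟩)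
      have h1 : z ≤ M.cp k := hlb _ hmem
      have h2 : M.cp k ≤ z := hzk.1
      exact ⟨k, by omega, Or.inr (le_antisymm h1 h2)⟩
  · -- z in an E-part : impossible
    obtain ⟨k, hkT, hzk⟩ := Set.mem_iUnion₂.1 hz
    exfalso
    rcases hext with hub | hlb
    · set y := (z + M.cp k) / 2 with hy
      have hy1 : z < y := by
        have := hzk.2
        simp only [hy]; linarith
      have hy2 : y ∈ M.Epart k := ⟨lt_trans hzk.1 hy1, by have := hzk.2; simp only [hy]; linarith⟩
      have : y ≤ z := hub y (by rw [heq]; exact Or.inr (Set.mem_iUnion₂.2 ⟨k, hkT, hy2⟩))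
      linarith
    · set y := (M.cm k + z) / 2 with hy
      have hy1 : y < z := by
        have := hzk.1
        simp only [hy]; linarith
      have hy2 : y ∈ M.Epart k := ⟨by have := hzk.1; simp only [hy]; linarith, lt_trans hy1 hzk.2⟩
      have : z ≤ y := hlb y (by rw [heq]; exact Or.inr (Set.mem_iUnion₂.2 ⟨k, hkT, hy2⟩))
      linarith

lemma endpoint_image_Gamma (hM : IsMarkov M) {i : ℕ} (hi : i < n) {w : ℝ}
    (hw : w ∈ M.Ipart i) (hend : w = M.cp i ∨ w = M.cm (i + 1)) :
    M.F i w ∈ M.Gamma := by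
  apply extreme_mem_Gamma hM hi ⟨w, hw, rfl⟩
  rcases hM.mono i hi with hmono | hanti
  · rcases hend with rfl | rfl
    · -- w is the min of Ipart i, F mono : F w is min of image
      right
      rintro y ⟨u, hu, rfl⟩
      rcases eq_or_lt_of_le hu.1 with h | h
      · rw [h]
      · exact (hmono hw hu h).le
    · left
      rintro y ⟨u, hu, rfl⟩
      rcases eq_or_lt_of_le hu.2 with h | h
      · rw [h]
      · exact (hmono hu hw h).le
  · rcases hend with rfl | rfl
    · left
      rintro y ⟨u, hu, rfl⟩
      rcases eq_or_lt_of_le hu.1 with h | h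
      · rw [h]
      · exact (hanti hw hu h).le
    · right
      rintro y ⟨u, hu, rfl⟩
      rcases eq_or_lt_of_le hu.2 with h | h
      · rw [h]
      · exact (hanti hu hw h).le

lemma injOn_F (hM : IsMarkov M) {i : ℕ} (hi : i < n) :
    Set.InjOn (M.F i) (M.Ipart i) := by
  rcases hM.mono i hi with h | h
  · exact h.injOn
  · exact h.injOn

end CKAux
namespace CKAux
open MarkovSystem Set

variable {n : ℕ} {M : MarkovSystem n} {x : ℝ}

lemma not_Gamma_of_Rclass (hx : x ∈ M.Lambda) {z : ℝ} (hz : z ∈ M.Rclass x) :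
    z ∉ M.Gamma := fun h => hx.2 z h hz.2

lemma mem_dom_of_Rclass (hx : x ∈ M.Lambda) {z : ℝ} (hz : z ∈ M.Rclass x) :
    z ∈ M.dom := by
  obtain ⟨p, q, hp, hq, heq⟩ := hz.2
  cases q with
  | zero =>
    have : z = M.f^[p] x := by simpa using heq.symm
    rw [this]
    exact hx.1.2 p
  | succ q' => exact hq 0 (Nat.succ_pos q')

/-- Every point of the generalized orbit lies in the open interior of a unique
Markov interval. -/
lemma exists_Ioo (hx : x ∈ M.Lambda) {z : ℝ} (hz : z ∈ M.Rclass x) :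
    ∃ i, i < n ∧ z ∈ Set.Ioo (M.cp i) (M.cm (i + 1)) := by
  obtain ⟨i, hi, hzi⟩ := Set.mem_iUnion₂.1 (mem_dom_of_Rclass hx hz)
  rw [Finset.mem_range] at hi
  refine ⟨i, hi, ?_⟩
  rcases eq_or_lt_of_le hzi.1 with h | h1
  · exact absurd ⟨i, hi.le, Or.inr h.symm⟩ (not_Gamma_of_Rclass hx hz)
  rcases eq_or_lt_of_le hzi.2 with h | h2
  · exact absurd ⟨i + 1, by omega, Or.inl h⟩ (not_Gamma_of_Rclass hx hz)
  exact ⟨h1, h2⟩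

lemma Ioo_unique (hx : x ∈ M.Lambda) {z : ℝ} (hz : z ∈ M.Rclass x) {i : ℕ}
    (hi : i < n) (hzi : z ∈ M.Ipart i) : z ∈ Set.Ioo (M.cp i) (M.cm (i + 1)) := by
  obtain ⟨j, hj, hzj⟩ := exists_Ioo hx hz
  rcases eq_or_ne i j with rfl | hne
  · exact hzj
  · exact absurd hzi (Ioo_not_Ipart hj hi hne hzj)

lemma f_eq_F (hM : IsMarkov M) {i : ℕ} (hi : i < n) {z : ℝ}
    (hz : z ∈ Set.Ioo (M.cp i) (M.cm (i + 1))) : M.f z = M.F i z :=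
  hM.compat₁ i hi z ⟨hz.1.le, hz.2.le⟩
    (fun k hk hne => Ioo_not_Ipart hi hk hne hz)

/-- Forward invariance of the orbit class. -/
lemma forward (hM : IsMarkov M) (hx : x ∈ M.Lambda) {z : ℝ} (hz : z ∈ M.Rclass x)
    {i : ℕ} (hi : i < n) (hzi : z ∈ M.Ipart i) :
    M.f z = M.F i z ∧ M.F i z ∈ M.Rclass x := by
  have hIoo := Ioo_unique hx hz hi hzi
  have hfz : M.f z = M.F i z := f_eq_F hM hi hIoo
  refine ⟨hfz, hM.maps_into i hi ⟨z, hzi, rfl⟩, ?_⟩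
  obtain ⟨p, q, hp, hq, heq⟩ := hz.2
  refine ⟨p + 1, q, fun l _ => hx.1.2 l, ?_, ?_⟩
  · intro l hl
    have h1 : M.f^[l] (M.F i z) = M.f^[l + 1] z := by
      rw [Function.iterate_succ_apply, hfz]
    rw [h1]
    rcases lt_or_eq_of_le (Nat.succ_le_of_lt hl) with h | h
    · exact hq (l + 1) h
    · have h' : l + 1 = q := h
      rw [h', ← heq]
      exact hx.1.2 p
  · calc M.f^[p + 1] x = M.f (M.f^[p] x) := Function.iterate_succ_apply' M.f p x
      _ = M.f (M.f^[q] z) := by rw [heq]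
      _ = M.f^[q + 1] z := (Function.iterate_succ_apply' M.f q z).symm
      _ = M.f^[q] (M.f z) := Function.iterate_succ_apply M.f q z
      _ = M.f^[q] (M.F i z) := by rw [hfz]

/-- Backward invariance: preimages of orbit points under a branch lie in the
open interior and belong to the orbit. -/
lemma backward (hM : IsMarkov M) (hx : x ∈ M.Lambda) {z : ℝ} (hz : z ∈ M.Rclass x)
    {i : ℕ} (hi : i < n) {w : ℝ} (hw : w ∈ M.Ipart i) (hfw : M.F i w = z) :
    w ∈ Set.Ioo (M.cp i) (M.cm (i + 1)) ∧ w ∈ M.Rclass x ∧ M.f w = z := by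
  have hIoo : w ∈ Set.Ioo (M.cp i) (M.cm (i + 1)) := by
    rcases eq_or_lt_of_le hw.1 with h | h1
    · exact absurd (hfw ▸ endpoint_image_Gamma hM hi hw (Or.inl h.symm))
        (not_Gamma_of_Rclass hx hz)
    rcases eq_or_lt_of_le hw.2 with h | h2
    · exact absurd (hfw ▸ endpoint_image_Gamma hM hi hw (Or.inr h))
        (not_Gamma_of_Rclass hx hz)
    exact ⟨h1, h2⟩
  have hfweq : M.f w = z := by rw [f_eq_F hM hi hIoo, hfw]
  refine ⟨hIoo, ⟨Ipart_subset_itv hi hw, ?_⟩, hfweq⟩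
  obtain ⟨p, q, hp, hq, heq⟩ := hz.2
  refine ⟨p, q + 1, hp, ?_, ?_⟩
  · intro l hl
    cases l with
    | zero => exact mem_dom_of_Ipart hi hw
    | succ l' =>
      rw [Function.iterate_succ_apply, hfweq]
      exact hq l' (by omega)
  · rw [Function.iterate_succ_apply, hfweq, heq]

lemma iterImage_spec (M : MarkovSystem n) :
    ∀ (q : ℕ) (S : Set ℝ) (y : ℝ), y ∈ M.iterImage q S →
      ∃ w ∈ S, M.definedUpTo q w ∧ M.f^[q] w = y := by
  intro q
  induction q with
  | zero => exact fun S y hy => ⟨y, hy, fun l hl => absurd hl (Nat.not_lt_zero l), rfl⟩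
  | succ q' ih =>
    intro S y hy
    obtain ⟨u, ⟨hu1, hu2⟩, rfl⟩ := hy
    obtain ⟨w, hwS, hdef, hfw⟩ := ih S u hu1
    refine ⟨w, hwS, ?_, ?_⟩
    · intro l hl
      rcases lt_or_eq_of_le (Nat.lt_succ_iff.1 hl) with h | h
      · exact hdef l h
      · rw [h, hfw]; exact hu2
    · rw [Function.iterate_succ_apply', hfw]

lemma exists_base (hM : IsMarkov M) (hx : x ∈ M.Lambda) {i : ℕ} (hi : i < n) :
    ∃ w, w ∈ M.Rclass x ∧ w ∈ M.Ipart i := by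
  obtain ⟨q, hsub⟩ := hM.aperiodic i hi
  have hxdom : x ∈ M.dom := by simpa using hx.1.2 0
  obtain ⟨w, hwI, hdef, hfw⟩ := iterImage_spec M q (M.Ipart i) x (hsub hxdom)
  exact ⟨w, ⟨Ipart_subset_itv hi hwI,
    0, q, fun l hl => absurd hl (Nat.not_lt_zero l), hdef, by simpa using hfw.symm⟩, hwI⟩

end CKAux
namespace CKAux
open MarkovSystem Set

variable {n : ℕ} {M : MarkovSystem n} {x : ℝ}

lemma Ipart_subset_image (hM : IsMarkov M) {i j : ℕ} (hi : i < n) (hj : j < n)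
    {z : ℝ} (hzIoo : z ∈ Set.Ioo (M.cp j) (M.cm (j + 1)))
    (hz : z ∈ M.F i '' M.Ipart i) : M.Ipart j ⊆ M.F i '' M.Ipart i := by
  obtain ⟨S, Tt, hS, hTt, heq⟩ := hM.markov i hi
  rw [heq] at hz ⊢
  rcases hz with hz | hz
  · obtain ⟨k, hkS, hzk⟩ := Set.mem_iUnion₂.1 hz
    have hkn : k < n := hS hkS
    have hkj : k = j := by
      by_contra hne
      exact Ioo_not_Ipart hj hkn hne hzIoo hzk
    subst hkj
    exact fun y hy => Or.inl (Set.mem_iUnion₂.2 ⟨k, hkS, hy⟩)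
  · obtain ⟨k, hkT, hzk⟩ := Set.mem_iUnion₂.1 hz
    exact absurd hzk (Ioo_not_Epart hj (hTt hkT).1 (hTt hkT).2 hzIoo)

lemma trans_of_mem_image (hM : IsMarkov M) {i j : ℕ} (hi : i < n) (hj : j < n)
    {z : ℝ} (hzIoo : z ∈ Set.Ioo (M.cp j) (M.cm (j + 1)))
    (hz : z ∈ M.F i '' M.Ipart i) : M.trans i j := by
  intro y hy
  rw [Ipart, interior_Icc] at hy
  obtain ⟨u, hu, hfu⟩ := Ipart_subset_image hM hi hj hzIoo hz ⟨hy.1.le, hy.2.le⟩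
  have huIoo : u ∈ Set.Ioo (M.cp i) (M.cm (i + 1)) := by
    rcases eq_or_lt_of_le hu.1 with h | h1
    · exact absurd (hfu ▸ endpoint_image_Gamma hM hi hu (Or.inl h.symm))
        (Ioo_not_Gamma hj hy)
    rcases eq_or_lt_of_le hu.2 with h | h2
    · exact absurd (hfu ▸ endpoint_image_Gamma hM hi hu (Or.inr h))
        (Ioo_not_Gamma hj hy)
    exact ⟨h1, h2⟩
  exact ⟨u, by rwa [Ipart, interior_Icc], hfu⟩

lemma mem_image_of_trans {i j : ℕ} (ht : M.trans i j)
    {z : ℝ} (hzIoo : z ∈ Set.Ioo (M.cp j) (M.cm (j + 1))) :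
    z ∈ M.F i '' M.Ipart i := by
  have := ht (by rwa [Ipart, interior_Icc])
  exact Set.image_mono interior_subset this

end CKAux
namespace CKAux
open MarkovSystem

variable {n : ℕ} {M : MarkovSystem n} {x : ℝ}

lemma dvec_apply (z ζ : M.Rclass x) :
    (M.dvec z : ∀ _ : M.Rclass x, ℂ) ζ = if ζ = z then 1 else 0 := by
  rcases eq_or_ne ζ z with rfl | h
  · simp [MarkovSystem.dvec, lp.single_apply_self]
  · simp [MarkovSystem.dvec, lp.single_apply_ne _ _ _ h, h]

lemma dvec_ne_zero (z : M.Rclass x) : M.dvec z ≠ 0 := by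
  intro h
  have h1 : (M.dvec z : ∀ _ : M.Rclass x, ℂ) z = 1 := by simp [dvec_apply]
  rw [h] at h1
  simp at h1

lemma coord (v : M.Hsp x) (z : M.Rclass x) : (inner ℂ (M.dvec z) v : ℂ) = v z := by
  rw [MarkovSystem.dvec, lp.inner_single_left]
  simp

lemma ext_basis (A B : M.Hsp x →L[ℂ] M.Hsp x)
    (h : ∀ z : M.Rclass x, A (M.dvec z) = B (M.dvec z)) : A = B := by
  have hadj : ContinuousLinearMap.adjoint A = ContinuousLinearMap.adjoint B := by
    ext u ζ
    calc (ContinuousLinearMap.adjoint A u) ζ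
        = (inner ℂ (M.dvec ζ) (ContinuousLinearMap.adjoint A u) : ℂ) := (coord _ _).symm
      _ = (inner ℂ (A (M.dvec ζ)) u : ℂ) := ContinuousLinearMap.adjoint_inner_right A (M.dvec ζ) u
      _ = (inner ℂ (B (M.dvec ζ)) u : ℂ) := by rw [h ζ]
      _ = (inner ℂ (M.dvec ζ) (ContinuousLinearMap.adjoint B u) : ℂ) :=
          (ContinuousLinearMap.adjoint_inner_right B (M.dvec ζ) u).symm
      _ = (ContinuousLinearMap.adjoint B u) ζ := coord _ _
  rw [← ContinuousLinearMap.adjoint_adjoint A, ← ContinuousLinearMap.adjoint_adjoint B, hadj]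

lemma Tapply_of_image (hM : IsMarkov M) (hx : x ∈ M.Lambda) {i : ℕ} (hi : i < n)
    {T : M.Hsp x →L[ℂ] M.Hsp x} (hTi : M.IsBranchOp x i T) (z : M.Rclass x)
    (himg : (z : ℝ) ∈ M.F i '' M.Ipart i) :
    ∃ w : M.Rclass x, (w : ℝ) ∈ M.Ipart i ∧ M.F i w = (z : ℝ) ∧
      T (M.dvec z) = M.dvec w := by
  obtain ⟨w0, hw0, hfw0⟩ := himg
  have hb := backward hM hx z.2 hi hw0 hfw0
  exact ⟨⟨w0, hb.2.1⟩, hw0, hfw0, hTi.1 z ⟨w0, hb.2.1⟩ hw0 hfw0⟩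

lemma adj_mem (hM : IsMarkov M) (hx : x ∈ M.Lambda) {i : ℕ} (hi : i < n)
    {T : M.Hsp x →L[ℂ] M.Hsp x} (hTi : M.IsBranchOp x i T) (z : M.Rclass x)
    (hzI : (z : ℝ) ∈ M.Ipart i) :
    star T (M.dvec z) = M.dvec ⟨M.F i z, (forward hM hx z.2 hi hzI).2⟩ := by
  rw [ContinuousLinearMap.star_eq_adjoint]
  apply lp.ext
  funext ζ
  have key : (ContinuousLinearMap.adjoint T (M.dvec z)) ζ
      = (inner ℂ (T (M.dvec ζ)) (M.dvec z) : ℂ) := by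
    rw [← coord, ContinuousLinearMap.adjoint_inner_right]
  rw [key]
  show _ = (M.dvec ⟨M.F i z, (forward hM hx z.2 hi hzI).2⟩ : ∀ _ : M.Rclass x, ℂ) ζ
  rw [dvec_apply]
  by_cases himg : (ζ : ℝ) ∈ M.F i '' M.Ipart i
  · obtain ⟨w, hwI, hfw, hTw⟩ := Tapply_of_image hM hx hi hTi ζ himg
    rw [hTw, coord, dvec_apply]
    by_cases hwz : w = z
    · subst hwz
      have hzeta : ζ = (⟨M.F i w, (forward hM hx w.2 hi hzI).2⟩ : M.Rclass x) :=
        Subtype.ext hfw.symm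
      simp [hzeta]
    · rw [if_neg hwz, if_neg]
      intro hc
      apply hwz
      apply Subtype.ext
      apply injOn_F hM hi hwI hzI
      rw [hfw]
      exact congrArg Subtype.val hc
  · rw [hTi.2 ζ himg]
    rw [inner_zero_left, if_neg]
    intro hc
    apply himg
    have : (ζ : ℝ) = M.F i z := congrArg Subtype.val hc
    exact ⟨z, hzI, this.symm⟩

lemma adj_notmem {i : ℕ} (hM : IsMarkov M) (hx : x ∈ M.Lambda) (hi : i < n)
    {T : M.Hsp x →L[ℂ] M.Hsp x} (hTi : M.IsBranchOp x i T) (z : M.Rclass x)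
    (hzI : (z : ℝ) ∉ M.Ipart i) : star T (M.dvec z) = 0 := by
  rw [ContinuousLinearMap.star_eq_adjoint]
  apply lp.ext
  funext ζ
  have key : (ContinuousLinearMap.adjoint T (M.dvec z)) ζ
      = (inner ℂ (T (M.dvec ζ)) (M.dvec z) : ℂ) := by
    rw [← coord, ContinuousLinearMap.adjoint_inner_right]
  rw [key]
  show _ = (0 : M.Hsp x) ζ
  rw [lp.coeFn_zero]
  by_cases himg : (ζ : ℝ) ∈ M.F i '' M.Ipart i
  · obtain ⟨w, hwI, hfw, hTw⟩ := Tapply_of_image hM hx hi hTi ζ himg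
    rw [hTw, coord, dvec_apply, if_neg, Pi.zero_apply]
    intro hc
    exact hzI (hc ▸ hwI)
  · rw [hTi.2 ζ himg, inner_zero_left, Pi.zero_apply]

lemma Papply (hM : IsMarkov M) (hx : x ∈ M.Lambda) {i : ℕ} (hi : i < n)
    {T : M.Hsp x →L[ℂ] M.Hsp x} (hTi : M.IsBranchOp x i T) (z : M.Rclass x) :
    (T * star T) (M.dvec z) = if (z : ℝ) ∈ M.Ipart i then M.dvec z else 0 := by
  by_cases hzI : (z : ℝ) ∈ M.Ipart i
  · rw [if_pos hzI, ContinuousLinearMap.mul_apply, adj_mem hM hx hi hTi z hzI]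
    exact hTi.1 ⟨M.F i z, (forward hM hx z.2 hi hzI).2⟩ z hzI rfl
  · rw [if_neg hzI, ContinuousLinearMap.mul_apply, adj_notmem hM hx hi hTi z hzI,
      map_zero]

end CKAux

/-- Concrete content of Theorem 3.2(2): for a regular point `x ∈ Λ_f`, the
operators `T_i` are partial isometries with nonzero pairwise orthogonal range
projections satisfying the Cuntz–Krieger relations
`T_i* T_i = ∑_j a_{ij} T_j T_j*` and `∑_i T_i T_i* = 1`. -/
theorem cuntz_krieger_relations_regular {n : ℕ} (M : MarkovSystem n) (hM : IsMarkov M)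
    {x : ℝ} (hx : x ∈ M.Lambda)
    (T : ℕ → (M.Hsp x →L[ℂ] M.Hsp x)) (hT : ∀ i < n, M.IsBranchOp x i (T i)) :
    (∀ i < n, T i * star (T i) * T i = T i ∧
      T i * star (T i) ≠ 0 ∧
      IsSelfAdjoint (T i * star (T i)) ∧
      (T i * star (T i)) * (T i * star (T i)) = T i * star (T i)) ∧
    (∀ i < n, ∀ j < n, i ≠ j → (T i * star (T i)) * (T j * star (T j)) = 0) ∧
    (∀ i < n, star (T i) * T i =
      ∑ j ∈ Finset.range n, if M.trans i j then T j * star (T j) else 0) ∧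
    (∑ i ∈ Finset.range n, T i * star (T i)) = 1 := by
  classical
  have hP : ∀ i, i < n → ∀ z : M.Rclass x,
      (T i * star (T i)) (M.dvec z) = if (z : ℝ) ∈ M.Ipart i then M.dvec z else 0 :=
    fun i hi z => CKAux.Papply hM hx hi (hT i hi) z
  refine ⟨?_, ?_, ?_, ?_⟩
  · intro i hi
    refine ⟨?_, ?_, IsSelfAdjoint.mul_star_self (T i), ?_⟩
    · -- T T* T = T
      apply CKAux.ext_basis
      intro z
      rw [ContinuousLinearMap.mul_apply, ContinuousLinearMap.mul_apply]
      by_cases himg : (z : ℝ) ∈ M.F i '' M.Ipart i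
      · obtain ⟨w, hwI, hfw, hTw⟩ := CKAux.Tapply_of_image hM hx hi (hT i hi) z himg
        rw [hTw, CKAux.adj_mem hM hx hi (hT i hi) w hwI]
        have hwz : (⟨M.F i ↑w, (CKAux.forward hM hx w.2 hi hwI).2⟩ : M.Rclass x) = z :=
          Subtype.ext hfw
        rw [hwz]
        exact hTw
      · rw [(hT i hi).2 z himg, map_zero, map_zero]
    · -- nonzero
      obtain ⟨w, hwR, hwI⟩ := CKAux.exists_base hM hx hi
      intro h0
      have h1 := hP i hi ⟨w, hwR⟩
      rw [h0, if_pos hwI, ContinuousLinearMap.zero_apply] at h1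
      exact CKAux.dvec_ne_zero ⟨w, hwR⟩ h1.symm
    · -- idempotent
      apply CKAux.ext_basis
      intro z
      rw [ContinuousLinearMap.mul_apply, hP i hi z]
      by_cases hzI : (z : ℝ) ∈ M.Ipart i
      · rw [if_pos hzI, hP i hi z, if_pos hzI]
      · rw [if_neg hzI, map_zero]
  · -- orthogonality
    intro i hi j hj hij
    apply CKAux.ext_basis
    intro z
    rw [ContinuousLinearMap.mul_apply, hP j hj z, ContinuousLinearMap.zero_apply]
    by_cases hzJ : (z : ℝ) ∈ M.Ipart j
    · rw [if_pos hzJ, hP i hi z, if_neg]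
      intro hzI
      exact CKAux.Ioo_not_Ipart hi hj (Ne.symm hij) (CKAux.Ioo_unique hx z.2 hi hzI) hzJ
    · rw [if_neg hzJ, map_zero]
  · -- Cuntz-Krieger relation
    intro i hi
    apply CKAux.ext_basis
    intro z
    obtain ⟨j0, hj0, hzIoo⟩ := CKAux.exists_Ioo hx z.2
    have hothers : ∀ j ∈ Finset.range n, j ≠ j0 →
        (if M.trans i j then T j * star (T j) else 0) (M.dvec z) = 0 := by
      intro j hjmem hne
      rw [Finset.mem_range] at hjmem
      by_cases ht : M.trans i j
      · rw [if_pos ht, hP j hjmem z, if_neg (CKAux.Ioo_not_Ipart hj0 hjmem hne hzIoo)]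
      · rw [if_neg ht, ContinuousLinearMap.zero_apply]
    rw [ContinuousLinearMap.sum_apply,
      Finset.sum_eq_single_of_mem j0 (Finset.mem_range.2 hj0) hothers,
      ContinuousLinearMap.mul_apply]
    by_cases himg : (z : ℝ) ∈ M.F i '' M.Ipart i
    · obtain ⟨w, hwI, hfw, hTw⟩ := CKAux.Tapply_of_image hM hx hi (hT i hi) z himg
      rw [hTw, CKAux.adj_mem hM hx hi (hT i hi) w hwI,
        if_pos (CKAux.trans_of_mem_image hM hi hj0 hzIoo himg), hP j0 hj0 z,
        if_pos (show (z : ℝ) ∈ M.Ipart j0 from ⟨hzIoo.1.le, hzIoo.2.le⟩)]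
      have hwz : (⟨M.F i ↑w, (CKAux.forward hM hx w.2 hi hwI).2⟩ : M.Rclass x) = z :=
        Subtype.ext hfw
      rw [hwz]
    · rw [(hT i hi).2 z himg, map_zero,
        if_neg (fun ht => himg (CKAux.mem_image_of_trans ht hzIoo)),
        ContinuousLinearMap.zero_apply]
  · -- sum = 1
    apply CKAux.ext_basis
    intro z
    obtain ⟨j0, hj0, hzIoo⟩ := CKAux.exists_Ioo hx z.2
    have hothers : ∀ j ∈ Finset.range n, j ≠ j0 →
        (T j * star (T j)) (M.dvec z) = 0 := by
      intro j hjmem hne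
      rw [Finset.mem_range] at hjmem
      rw [hP j hjmem z, if_neg (CKAux.Ioo_not_Ipart hj0 hjmem hne hzIoo)]
    rw [ContinuousLinearMap.sum_apply,
      Finset.sum_eq_single_of_mem j0 (Finset.mem_range.2 hj0) hothers,
      hP j0 hj0 z, if_pos ⟨hzIoo.1.le, hzIoo.2.le⟩, ContinuousLinearMap.one_apply]
end
end

section
/- (Irreducibility.) Let f be a Markov interval map and x ∈ E_f. If a bounded operator W on H_x commutes with T_i and with T_i* for every i ∈ {1,…,n}, then W is a scalar multiple of the identity. -/
open scoped Classical ENNReal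

noncomputable section

namespace MIMProof

open MarkovSystem

variable {n : ℕ} {M : MarkovSystem n}

/-- chain inequality -/
lemma cp_lt_cm_of_lt (M : MarkovSystem n) : ∀ {a b : ℕ}, a < b → b ≤ n → M.cp a < M.cm b := by
  intro a b hab hbn
  induction b with
  | zero => omega
  | succ k ih =>
    rcases Nat.lt_succ_iff_lt_or_eq.mp hab with h | h
    · calc M.cp a < M.cm k := ih h (by omega)
        _ ≤ M.cp k := M.cm_le_cp k (by omega)
        _ < M.cm (k+1) := M.cp_lt_cm k (by omega)
    · subst h; exact M.cp_lt_cm a (by omega)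

lemma cp_le_cp (M : MarkovSystem n) {a b : ℕ} (h : a ≤ b) (hb : b ≤ n) : M.cp a ≤ M.cp b := by
  rcases Nat.lt_or_ge a b with h' | h'
  · exact le_trans (le_of_lt (cp_lt_cm_of_lt M h' hb)) (M.cm_le_cp b hb)
  · have : a = b := le_antisymm h h'
    simp [this]

lemma cm_le_cm (M : MarkovSystem n) {a b : ℕ} (h : a ≤ b) (hb : b ≤ n) : M.cm a ≤ M.cm b := by
  rcases Nat.lt_or_ge a b with h' | h'
  · exact le_trans (M.cm_le_cp a (by omega)) (le_of_lt (cp_lt_cm_of_lt M h' hb))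
  · have : a = b := le_antisymm h h'
    simp [this]

lemma Ipart_subset_itv (M : MarkovSystem n) {j : ℕ} (hj : j < n) : M.Ipart j ⊆ M.itv := by
  intro y hy
  rcases hy with ⟨h1, h2⟩
  constructor
  · calc M.cm 0 ≤ M.cp j := by
          rw [M.cm_zero]; exact cp_le_cp M (Nat.zero_le j) (le_of_lt hj)
      _ ≤ y := h1
  · calc y ≤ M.cm (j+1) := h2
      _ ≤ M.cm n := cm_le_cm M hj le_rfl

end MIMProof
namespace MIMProof
open MarkovSystem

variable {n : ℕ} {M : MarkovSystem n}

lemma cm_le_cp' (M : MarkovSystem n) {a b : ℕ} (h : a ≤ b) (hb : b ≤ n) : M.cm a ≤ M.cp b :=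
  (cm_le_cm M h hb).trans (M.cm_le_cp b hb)

lemma mem_dom_of_mem_Ipart (M : MarkovSystem n) {j : ℕ} (hj : j < n) {y : ℝ}
    (hy : y ∈ M.Ipart j) : y ∈ M.dom := by
  simp only [MarkovSystem.dom, Set.mem_iUnion, Finset.mem_range]
  exact ⟨j, hj, hy⟩

lemma cm_mem_dom (M : MarkovSystem n) {j : ℕ} (hj : j ≤ n) : M.cm j ∈ M.dom := by
  rcases Nat.eq_zero_or_pos j with h0 | h0
  · subst h0
    refine mem_dom_of_mem_Ipart M (show 0 < n by have := M.two_le; omega) ⟨le_of_eq M.cm_zero.symm, ?_⟩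
    rw [M.cm_zero]
    exact le_of_lt (M.cp_lt_cm 0 (by have := M.two_le; omega))
  · have hlt : j - 1 < n := by omega
    refine mem_dom_of_mem_Ipart M hlt ⟨?_, ?_⟩
    · exact le_of_lt (cp_lt_cm_of_lt M (show j - 1 < j by omega) hj)
    · have : j - 1 + 1 = j := by omega
      rw [this]

lemma Gamma_subset_dom (M : MarkovSystem n) : M.Gamma ⊆ M.dom := by
  rintro y ⟨j, hj, hy | hy⟩
  · subst hy; exact cm_mem_dom M hj
  · subst hy
    rcases Nat.lt_or_ge j n with h0 | h0
    · exact mem_dom_of_mem_Ipart M h0 ⟨le_rfl, le_of_lt (M.cp_lt_cm j h0)⟩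
    · have hjn : j = n := by omega
      have : M.cp j = M.cm j := by rw [hjn]; exact M.cm_n.symm
      rw [this]
      exact cm_mem_dom M hj

lemma eq_endpoint_of_Gamma (M : MarkovSystem n) {i : ℕ} (hi : i < n) {y : ℝ}
    (hyG : y ∈ M.Gamma) (hy : y ∈ M.Ipart i) : y = M.cp i ∨ y = M.cm (i + 1) := by
  obtain ⟨j, hj, hc⟩ := hyG
  rcases Nat.lt_or_ge i j with hij | hij
  · -- i + 1 ≤ j : y = cm (i+1)
    right
    have h1 : M.cm (i+1) ≤ y := by
      rcases hc with hc | hc <;> subst hc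
      · exact cm_le_cm M hij hj
      · exact cm_le_cp' M hij hj
    exact le_antisymm hy.2 h1
  · -- j ≤ i : y = cp i
    left
    have h1 : y ≤ M.cp i := by
      rcases hc with hc | hc <;> subst hc
      · exact cm_le_cp' M hij (le_of_lt hi)
      · exact cp_le_cp M hij (le_of_lt hi)
    exact le_antisymm h1 hy.1

lemma cp_mem_Gamma (M : MarkovSystem n) {j : ℕ} (hj : j ≤ n) : M.cp j ∈ M.Gamma :=
  ⟨j, hj, Or.inr rfl⟩

lemma cm_mem_Gamma (M : MarkovSystem n) {j : ℕ} (hj : j ≤ n) : M.cm j ∈ M.Gamma :=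
  ⟨j, hj, Or.inl rfl⟩

/-- image of a Gamma point of `I_i` under `F i` is again a Gamma point. -/
lemma F_Gamma_mem_Gamma (hM : IsMarkov M) {i : ℕ} (hi : i < n) {y : ℝ}
    (hy : y ∈ M.Ipart i) (hyG : y ∈ M.Gamma) : M.F i y ∈ M.Gamma := by
  obtain ⟨S, Tt, hS, hTt, him⟩ := hM.markov i hi
  -- extremality
  have hext : (∀ z ∈ M.F i '' M.Ipart i, M.F i y ≤ z) ∨
      (∀ z ∈ M.F i '' M.Ipart i, z ≤ M.F i y) := by
    have hend := eq_endpoint_of_Gamma M hi hyG hy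
    rcases hM.mono i hi with hm | hm
    · rcases hend with he | he
      · left; rintro z ⟨t, ht, rfl⟩
        exact hm.monotoneOn hy ht (he ▸ ht.1)
      · right; rintro z ⟨t, ht, rfl⟩
        exact hm.monotoneOn ht hy (he ▸ ht.2)
    · rcases hend with he | he
      · right; rintro z ⟨t, ht, rfl⟩
        exact hm.antitoneOn hy ht (he ▸ ht.1)
      · left; rintro z ⟨t, ht, rfl⟩
        exact hm.antitoneOn ht hy (he ▸ ht.2)
  have hmem : M.F i y ∈ M.F i '' M.Ipart i := ⟨y, hy, rfl⟩
  rw [him] at hmem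
  rcases hmem with hmem | hmem
  · -- in some I_s
    rw [Set.mem_iUnion₂] at hmem
    obtain ⟨s, hsS, hins⟩ := hmem
    have hsn : s < n := hS hsS
    rcases hext with hext | hext
    · -- min : F i y = cp s
      have h1 : M.cp s ∈ M.F i '' M.Ipart i := by
        rw [him]; left
        exact Set.mem_biUnion hsS ⟨le_rfl, le_of_lt (M.cp_lt_cm s hsn)⟩
      have := hext _ h1
      have heq : M.F i y = M.cp s := le_antisymm this hins.1
      rw [heq]; exact cp_mem_Gamma M (le_of_lt hsn)
    · -- max : F i y = cm (s+1)
      have h1 : M.cm (s+1) ∈ M.F i '' M.Ipart i := by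
        rw [him]; left
        exact Set.mem_biUnion hsS ⟨le_of_lt (M.cp_lt_cm s hsn), le_rfl⟩
      have := hext _ h1
      have heq : M.F i y = M.cm (s+1) := le_antisymm hins.2 this
      rw [heq]; exact cm_mem_Gamma M hsn
  · -- in some E_t : impossible
    rw [Set.mem_iUnion₂] at hmem
    obtain ⟨t, htT, hint⟩ := hmem
    exfalso
    rcases hext with hext | hext
    · set u := (M.cm t + M.F i y) / 2 with hu
      have hu1 : M.cm t < u := by rw [hu]; linarith [hint.1]
      have hu2 : u < M.F i y := by rw [hu]; linarith [hint.1]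
      have humem : u ∈ M.F i '' M.Ipart i := by
        rw [him]; right
        exact Set.mem_biUnion htT ⟨hu1, hu2.trans hint.2⟩
      exact absurd (hext _ humem) (not_le.mpr hu2)
    · set u := (M.F i y + M.cp t) / 2 with hu
      have hu1 : M.F i y < u := by rw [hu]; linarith [hint.2]
      have hu2 : u < M.cp t := by rw [hu]; linarith [hint.2]
      have humem : u ∈ M.F i '' M.Ipart i := by
        rw [him]; right
        exact Set.mem_biUnion htT ⟨hint.1.trans hu1, hu2⟩
      exact absurd (hext _ humem) (not_le.mpr hu1)

/-- Gamma points never leave the domain. -/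
lemma Gamma_no_escape (hM : IsMarkov M) {y : ℝ} (hy : y ∈ M.Gamma) (k : ℕ) :
    M.f^[k] y ∈ M.dom ∧ M.f^[k] y ∈ M.Gamma := by
  induction k with
  | zero => exact ⟨Gamma_subset_dom M hy, hy⟩
  | succ k ih =>
    obtain ⟨hdom, hG⟩ := ih
    obtain ⟨j, hjn, hjI, hjf⟩ := hM.compat₂ _ hdom
    have hG' : M.f (M.f^[k] y) ∈ M.Gamma := by
      rw [hjf]; exact F_Gamma_mem_Gamma hM hjn hjI hG
    rw [Function.iterate_succ_apply']
    exact ⟨Gamma_subset_dom M hG', hG'⟩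

end MIMProof
namespace MIMProof
open MarkovSystem

variable {n : ℕ} {M : MarkovSystem n}

lemma dom_subset_itv (M : MarkovSystem n) : M.dom ⊆ M.itv := by
  intro y hy
  simp only [MarkovSystem.dom, Set.mem_iUnion, Finset.mem_range] at hy
  obtain ⟨j, hj, hyj⟩ := hy
  exact Ipart_subset_itv M hj hyj

lemma f_mem_itv (hM : IsMarkov M) {y : ℝ} (hy : y ∈ M.dom) : M.f y ∈ M.itv := by
  obtain ⟨j, hjn, hjI, hjf⟩ := hM.compat₂ y hy
  rw [hjf]
  exact hM.maps_into j hjn ⟨y, hjI, rfl⟩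

lemma lt_tau_mem_dom {y : ℝ} {l : ℕ} (h : l < M.tau y) : M.f^[l] y ∈ M.dom := by
  by_contra hc
  exact absurd (Nat.sInf_le (show l ∈ {k | M.f^[k] y ∉ M.dom} from hc)) (not_le.mpr h)

lemma tau_spec {y : ℝ} (h : ∃ k, M.f^[k] y ∉ M.dom) : M.f^[M.tau y] y ∉ M.dom :=
  Nat.sInf_mem h

lemma iter_mem_itv (hM : IsMarkov M) {y : ℝ} (hy : y ∈ M.itv) (k : ℕ)
    (hk : ∀ l < k, M.f^[l] y ∈ M.dom) : M.f^[k] y ∈ M.itv := by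
  induction k with
  | zero => exact hy
  | succ k ih =>
    rw [Function.iterate_succ_apply']
    exact f_mem_itv hM (hk k (by omega))

lemma esc_nonempty {x : ℝ} (hx : x ∈ M.Esc) : ∃ k, M.f^[k] x ∉ M.dom := by
  by_contra h
  push_neg at h
  exact hx.2 ⟨hx.1, h⟩

lemma e_mem_Rclass (hM : IsMarkov M) {x : ℝ} (hx : x ∈ M.Esc) : M.e x ∈ M.Rclass x := by
  constructor
  · exact iter_mem_itv hM hx.1 (M.tau x) (fun l hl => lt_tau_mem_dom hl)
  · exact ⟨M.tau x, 0, fun l hl => lt_tau_mem_dom hl, fun l hl => by omega, rfl⟩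

lemma eq_e_of_not_dom {x : ℝ} (hx : x ∈ M.Esc) {y : ℝ} (hy : y ∈ M.Rclass x)
    (hyd : y ∉ M.dom) : y = M.e x := by
  obtain ⟨hyI, p, q, hp, hq, heq⟩ := hy
  have hq0 : q = 0 := by
    by_contra h
    exact hyd (by simpa using hq 0 (by omega))
  rw [hq0] at heq
  simp only [Function.iterate_zero, id] at heq
  have hmem : p ∈ {k | M.f^[k] x ∉ M.dom} := by rw [Set.mem_setOf_eq, heq]; exact hyd
  have h1 : M.tau x ≤ p := Nat.sInf_le hmem
  have h2 : ¬ (M.tau x < p) := fun h => tau_spec (esc_nonempty hx) (hp _ h)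
  have h3 : p = M.tau x := by omega
  rw [MarkovSystem.e, ← h3, heq]

lemma f_mem_Rclass (hM : IsMarkov M) {x : ℝ} {y : ℝ} (hy : y ∈ M.Rclass x)
    (hyd : y ∈ M.dom) : M.f y ∈ M.Rclass x := by
  obtain ⟨hyI, p, q, hp, hq, heq⟩ := hy
  refine ⟨f_mem_itv hM hyd, ?_⟩
  rcases Nat.eq_zero_or_pos q with h0 | h0
  · refine ⟨p + 1, 0, ?_, fun l hl => by omega, ?_⟩
    · intro l hl
      rcases Nat.lt_or_ge l p with h | h
      · exact hp l h
      · have : l = p := by omega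
        rw [this, heq, h0]
        simpa using hyd
    · simp only [Function.iterate_zero, id]
      rw [Function.iterate_succ_apply', heq, h0]
      simp
  · refine ⟨p, q - 1, hp, ?_, ?_⟩
    · intro l hl
      rw [← Function.iterate_succ_apply]
      exact hq (l + 1) (by omega)
    · conv_lhs => rw [heq, show q = (q-1) + 1 by omega]
      rw [Function.iterate_succ_apply]

lemma mem_Rclass_of_f {x m : ℝ} (hmd : m ∈ M.dom) (hfm : M.f m ∈ M.Rclass x) :
    m ∈ M.Rclass x := by
  obtain ⟨hyI, p, q, hp, hq, heq⟩ := hfm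
  refine ⟨dom_subset_itv M hmd, p, q + 1, hp, ?_, ?_⟩
  · intro l hl
    cases l with
    | zero => simpa using hmd
    | succ l' => rw [Function.iterate_succ_apply]; exact hq l' (by omega)
  · rw [Function.iterate_succ_apply, heq]

lemma class_escapes {x : ℝ} (hx : x ∈ M.Esc) {y : ℝ} (hy : y ∈ M.Rclass x) :
    ∃ k, M.f^[k] y ∉ M.dom := by
  obtain ⟨hyI, p, q, hp, hq, heq⟩ := hy
  have hple : p ≤ M.tau x := by
    by_contra h
    exact tau_spec (esc_nonempty hx) (hp _ (by omega))
  refine ⟨(M.tau x - p) + q, ?_⟩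
  rw [Function.iterate_add_apply, ← heq, ← Function.iterate_add_apply,
    show M.tau x - p + p = M.tau x by omega]
  exact tau_spec (esc_nonempty hx)

lemma iterate_mem_Rclass (hM : IsMarkov M) {x y : ℝ} (hy : y ∈ M.Rclass x) (k : ℕ)
    (hk : ∀ l < k, M.f^[l] y ∈ M.dom) : M.f^[k] y ∈ M.Rclass x := by
  induction k with
  | zero => exact hy
  | succ k ih =>
    rw [Function.iterate_succ_apply']
    exact f_mem_Rclass hM (ih (fun l hl => hk l (by omega))) (hk k (by omega))

lemma iterate_tau_eq_e (hM : IsMarkov M) {x : ℝ} (hx : x ∈ M.Esc) {y : ℝ}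
    (hy : y ∈ M.Rclass x) : M.f^[M.tau y] y = M.e x := by
  refine eq_e_of_not_dom hx ?_ (tau_spec (class_escapes hx hy))
  exact iterate_mem_Rclass hM hy _ (fun l hl => lt_tau_mem_dom hl)

lemma tau_succ {x : ℝ} (hx : x ∈ M.Esc) {y : ℝ} (hy : y ∈ M.Rclass x)
    (hyd : y ∈ M.dom) : M.tau y = M.tau (M.f y) + 1 := by
  have hne : ∃ k, M.f^[k] y ∉ M.dom := class_escapes hx hy
  have h0 : M.tau y ≠ 0 := by
    intro h
    have := tau_spec hne
    rw [h] at this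
    exact this (by simpa using hyd)
  obtain ⟨k0, hk0⟩ : ∃ k0, M.tau y = k0 + 1 := ⟨M.tau y - 1, by omega⟩
  have hkey : M.f^[k0] (M.f y) ∉ M.dom := by
    rw [← Function.iterate_succ_apply]
    simp only [Nat.succ_eq_add_one]
    rw [← hk0]
    exact tau_spec hne
  have hnef : ∃ k, M.f^[k] (M.f y) ∉ M.dom := ⟨k0, hkey⟩
  have hle : M.tau (M.f y) ≤ k0 := Nat.sInf_le hkey
  have hge : ¬ (M.tau (M.f y) < k0) := by
    intro h
    have := tau_spec hnef
    rw [← Function.iterate_succ_apply] at this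
    simp only [Nat.succ_eq_add_one] at this
    exact this (lt_tau_mem_dom (show M.tau (M.f y) + 1 < M.tau y by omega))
  omega

/-- every point of `I_i` whose `F i`-image lies in the class belongs itself to the class. -/
lemma mem_Rclass_of_F_mem (hM : IsMarkov M) {x : ℝ} (hx : x ∈ M.Esc) {i : ℕ}
    (hin : i < n) {m : ℝ} (hm : m ∈ M.Ipart i) (hFm : M.F i m ∈ M.Rclass x) :
    m ∈ M.Rclass x := by
  by_cases hsh : ∀ k < n, k ≠ i → m ∉ M.Ipart k
  · have hf : M.f m = M.F i m := hM.compat₁ i hin m hm hsh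
    exact mem_Rclass_of_f (mem_dom_of_mem_Ipart M hin hm) (hf ▸ hFm)
  · exfalso
    push_neg at hsh
    obtain ⟨k, hk, hki, hmk⟩ := hsh
    have hmG : m ∈ M.Gamma := by
      rcases Nat.lt_or_ge k i with hik | hik
      · have h1 : m ≤ M.cp i := hmk.2.trans (cm_le_cp' M (by omega) (by omega))
        have h2 : m = M.cp i := le_antisymm h1 hm.1
        rw [h2]; exact cp_mem_Gamma M (by omega)
      · have hik' : i < k := by omega
        have h1 : M.cm (i + 1) ≤ m := (cm_le_cp' M (by omega) (by omega)).trans hmk.1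
        have h2 : m = M.cm (i + 1) := le_antisymm hm.2 h1
        rw [h2]; exact cm_mem_Gamma M (by omega)
    have hFG : M.F i m ∈ M.Gamma := F_Gamma_mem_Gamma hM hin hm hmG
    obtain ⟨k', hk'⟩ := class_escapes hx hFm
    exact hk' (Gamma_no_escape hM hFG k').1

end MIMProof
namespace MIMProof
open MarkovSystem

variable {n : ℕ} {M : MarkovSystem n}

lemma dvec_inner {x : ℝ} (z : M.Rclass x) (v : M.Hsp x) :
    (inner ℂ (M.dvec z) v : ℂ) = v z := by
  rw [MarkovSystem.dvec, lp.inner_single_left]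
  simp [RCLike.inner_apply]

lemma dvec_apply_self {x : ℝ} (z : M.Rclass x) : (M.dvec z : ∀ _ : M.Rclass x, ℂ) z = 1 := by
  simp [MarkovSystem.dvec, lp.single_apply]

lemma dvec_apply_ne {x : ℝ} (z w : M.Rclass x) (h : w ≠ z) :
    (M.dvec z : ∀ _ : M.Rclass x, ℂ) w = 0 := by
  simp [MarkovSystem.dvec, lp.single_apply, h]

lemma e_not_dom {x : ℝ} (hx : x ∈ M.Esc) : M.e x ∉ M.dom :=
  tau_spec (esc_nonempty hx)

/-- The key lemma: any operator commuting with all `T i` and their adjoints acts as a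
scalar on all basis vectors. -/
lemma scalar_on_basis (hM : IsMarkov M) {x : ℝ} (hx : x ∈ M.Esc)
    (T : ℕ → (M.Hsp x →L[ℂ] M.Hsp x)) (hT : ∀ i < n, M.IsBranchOp x i (T i))
    (V : M.Hsp x →L[ℂ] M.Hsp x)
    (hV : ∀ i < n, V * T i = T i * V ∧ V * star (T i) = star (T i) * V) :
    ∀ z : M.Rclass x,
      V (M.dvec z) =
        (inner ℂ (M.dvec (⟨M.e x, e_mem_Rclass hM hx⟩ : M.Rclass x))
          (V (M.dvec (⟨M.e x, e_mem_Rclass hM hx⟩ : M.Rclass x))) : ℂ) • M.dvec z := by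
  set eC : M.Rclass x := ⟨M.e x, e_mem_Rclass hM hx⟩ with heC
  set c : ℂ := (inner ℂ (M.dvec eC) (V (M.dvec eC)) : ℂ) with hc
  -- star (T i) kills the escape basis vector
  have hTadj : ∀ i, i < n → star (T i) (M.dvec eC) = 0 := by
    intro i hi
    apply lp.ext
    funext u
    have h1 : ((star (T i) (M.dvec eC)) : ∀ _ : M.Rclass x, ℂ) u
        = (inner ℂ (M.dvec u) (star (T i) (M.dvec eC)) : ℂ) := (dvec_inner _ _).symm
    rw [h1, ContinuousLinearMap.star_eq_adjoint, ContinuousLinearMap.adjoint_inner_right]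
    by_cases hu : (u : ℝ) ∈ M.F i '' M.Ipart i
    · obtain ⟨m, hmI, hFm⟩ := hu
      have hmC : m ∈ M.Rclass x :=
        mem_Rclass_of_F_mem hM hx hi hmI (by rw [hFm]; exact u.2)
      have hTu : T i (M.dvec u) = M.dvec ⟨m, hmC⟩ := (hT i hi).1 u ⟨m, hmC⟩ hmI hFm
      rw [hTu, dvec_inner]
      have hne : eC ≠ (⟨m, hmC⟩ : M.Rclass x) := by
        intro h
        apply e_not_dom hx
        have : M.e x = m := congrArg Subtype.val h
        rw [this]
        exact mem_dom_of_mem_Ipart M hi hmI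
      rw [dvec_apply_ne _ _ (Ne.symm hne)]
      simp [lp.coeFn_zero]
    · rw [(hT i hi).2 u hu]
      simp [lp.coeFn_zero]
  -- crux : V fixes the line through δ_e
  have hcrux : V (M.dvec eC) = c • M.dvec eC := by
    apply lp.ext
    funext z
    have h1 : ((V (M.dvec eC)) : ∀ _ : M.Rclass x, ℂ) z
        = (inner ℂ (M.dvec z) (V (M.dvec eC)) : ℂ) := (dvec_inner _ _).symm
    by_cases hz : z = eC
    · subst hz
      rw [h1, ← hc, lp.coeFn_smul, Pi.smul_apply, dvec_apply_self]
      simp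
    · have hzd : (z : ℝ) ∈ M.dom := by
        by_contra hzd
        exact hz (Subtype.ext (eq_e_of_not_dom hx z.2 hzd))
      obtain ⟨j, hj, hzI, hzf⟩ := hM.compat₂ (z : ℝ) hzd
      have hfzC : M.f (z : ℝ) ∈ M.Rclass x := f_mem_Rclass hM z.2 hzd
      have hTz : T j (M.dvec ⟨M.f (z : ℝ), hfzC⟩) = M.dvec z :=
        (hT j hj).1 ⟨M.f (z : ℝ), hfzC⟩ z hzI hzf.symm
      rw [h1, ← hTz, ← ContinuousLinearMap.adjoint_inner_right,
        ← ContinuousLinearMap.star_eq_adjoint]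
      have hcomm : star (T j) (V (M.dvec eC)) = V (star (T j) (M.dvec eC)) := by
        have := (hV j hj).2
        calc star (T j) (V (M.dvec eC)) = (star (T j) * V) (M.dvec eC) := rfl
          _ = (V * star (T j)) (M.dvec eC) := by rw [this]
          _ = V (star (T j) (M.dvec eC)) := rfl
      rw [hcomm, hTadj j hj]
      rw [lp.coeFn_smul, Pi.smul_apply, dvec_apply_ne _ _ (fun h => hz h)]
      simp
  -- induction on escape time
  have hmain : ∀ k : ℕ, ∀ z : M.Rclass x, M.tau (z : ℝ) = k →
      V (M.dvec z) = c • M.dvec z := by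
    intro k
    induction k with
    | zero =>
      intro z hz
      have hzd : (z : ℝ) ∉ M.dom := by
        have := tau_spec (class_escapes hx z.2)
        rw [hz] at this
        simpa using this
      have : z = eC := Subtype.ext (eq_e_of_not_dom hx z.2 hzd)
      rw [this]
      exact hcrux
    | succ k ih =>
      intro z hz
      have hzd : (z : ℝ) ∈ M.dom := by
        have := lt_tau_mem_dom (show 0 < M.tau (z : ℝ) by omega)
        simpa using this
      obtain ⟨j, hj, hzI, hzf⟩ := hM.compat₂ (z : ℝ) hzd
      have hfzC : M.f (z : ℝ) ∈ M.Rclass x := f_mem_Rclass hM z.2 hzd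
      have htau : M.tau (M.f (z : ℝ)) = k := by
        have := tau_succ hx z.2 hzd
        omega
      have hTz : T j (M.dvec ⟨M.f (z : ℝ), hfzC⟩) = M.dvec z :=
        (hT j hj).1 ⟨M.f (z : ℝ), hfzC⟩ z hzI hzf.symm
      have hIH := ih ⟨M.f (z : ℝ), hfzC⟩ htau
      calc V (M.dvec z) = V (T j (M.dvec ⟨M.f (z : ℝ), hfzC⟩)) := by rw [hTz]
        _ = (V * T j) (M.dvec ⟨M.f (z : ℝ), hfzC⟩) := rfl
        _ = (T j * V) (M.dvec ⟨M.f (z : ℝ), hfzC⟩) := by rw [(hV j hj).1]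
        _ = T j (V (M.dvec ⟨M.f (z : ℝ), hfzC⟩)) := rfl
        _ = T j (c • M.dvec ⟨M.f (z : ℝ), hfzC⟩) := by rw [hIH]
        _ = c • T j (M.dvec ⟨M.f (z : ℝ), hfzC⟩) := by rw [map_smul]
        _ = c • M.dvec z := by rw [hTz]
  intro z
  exact hmain (M.tau (z : ℝ)) z rfl

end MIMProof
/-- Irreducibility: any bounded operator on `H_x` commuting with all `T_i` and
`T_i*` is a scalar multiple of the identity. -/
theorem representation_irreducible {n : ℕ} (M : MarkovSystem n) (hM : IsMarkov M)
    {x : ℝ} (hx : x ∈ M.Esc)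
    (T : ℕ → (M.Hsp x →L[ℂ] M.Hsp x)) (hT : ∀ i < n, M.IsBranchOp x i (T i))
    (W : M.Hsp x →L[ℂ] M.Hsp x)
    (hW : ∀ i < n, W * T i = T i * W ∧ W * star (T i) = star (T i) * W) :
    ∃ c : ℂ, W = c • (1 : M.Hsp x →L[ℂ] M.Hsp x) := by
  classical
  have hWs : ∀ i < n, star W * T i = T i * star W ∧
      star W * star (T i) = star (T i) * star W := by
    intro i hi
    obtain ⟨h1, h2⟩ := hW i hi
    constructor
    · have h3 := congrArg star h2
      simp only [star_mul, star_star] at h3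
      exact h3.symm
    · have h3 := congrArg star h1
      simp only [star_mul] at h3
      exact h3.symm
  have hWsb := MIMProof.scalar_on_basis hM hx T hT (star W) hWs
  set eC : M.Rclass x := (⟨M.e x, MIMProof.e_mem_Rclass hM hx⟩ : M.Rclass x) with heC
  set c : ℂ := (inner ℂ (M.dvec eC) (W (M.dvec eC)) : ℂ) with hc
  set c' : ℂ := (inner ℂ (M.dvec eC) ((star W) (M.dvec eC)) : ℂ) with hc'
  have hconj : (starRingEnd ℂ) c' = c := by
    rw [hc', ContinuousLinearMap.star_eq_adjoint,
      ContinuousLinearMap.adjoint_inner_right, inner_conj_symm, hc]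
  refine ⟨c, ?_⟩
  ext u z
  have h1 : ((W u) : ∀ _ : M.Rclass x, ℂ) z = (inner ℂ (M.dvec z) (W u) : ℂ) :=
    (MIMProof.dvec_inner _ _).symm
  have h2 : (inner ℂ (M.dvec z) (W u) : ℂ)
      = (inner ℂ ((ContinuousLinearMap.adjoint W) (M.dvec z)) u : ℂ) :=
    (ContinuousLinearMap.adjoint_inner_left W u (M.dvec z)).symm
  have h3 : (ContinuousLinearMap.adjoint W) (M.dvec z) = c' • M.dvec z := by
    rw [← ContinuousLinearMap.star_eq_adjoint]
    exact hWsb z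
  rw [h1, h2, h3, inner_smul_left, hconj, MIMProof.dvec_inner]
  show c * (u : ∀ _ : M.Rclass x, ℂ) z = (((c • (1 : M.Hsp x →L[ℂ] M.Hsp x)) u) : ∀ _ : M.Rclass x, ℂ) z
  rw [ContinuousLinearMap.smul_apply, ContinuousLinearMap.one_apply, lp.coeFn_smul,
    Pi.smul_apply, smul_eq_mul]
end
end
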